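/- arXiv:2310.05284 — 13 statements merged into one kernel-verified Lean document; each statement's English description precedes it below -/
import Mathlib

section
/- Let B = (b_{ij})_{i,j=0}^{n−1} be an n×n skew-symmetric matrix with complex entries. Then every vertex lies on at most two smoothable edges: there do not exist four pairwise distinct indices j, i, k, l ∈ {0,…,n−1} such that the edges {j,i}, {j,k} and {j,l} are all smoothable for B. -/
open BigOperators Matrix

/-- The edge `{i,j}` is *smoothable* for the skew-symmetric matrix `B`:
`B i j ≠ 0` and for every `k ∉ {i,j}` the quotient `(B j k + B k i) / B i j`
is a non-negative integer. -/
def IsSmoothable {n : ℕ} (B : Matrix (Fin n) (Fin n) ℂ) (i j : Fin n) : Prop :=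
  B i j ≠ 0 ∧ ∀ k : Fin n, k ≠ i → k ≠ j → ∃ m : ℕ, (B j k + B k i) / B i j = (m : ℂ)

/-- Every vertex lies on at most two smoothable edges: there do
not exist four pairwise distinct indices `j, i, k, l` such that the edges
`{j,i}`, `{j,k}` and `{j,l}` are all smoothable for the skew-symmetric matrix `B`. -/
theorem at_most_two_smoothable_edges_per_vertex {n : ℕ}
    (B : Matrix (Fin n) (Fin n) ℂ) (hskew : ∀ i j, B j i = -B i j) :
    ¬ ∃ j i k l : Fin n,
        j ≠ i ∧ j ≠ k ∧ j ≠ l ∧ i ≠ k ∧ i ≠ l ∧ k ≠ l ∧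
        IsSmoothable B j i ∧ IsSmoothable B j k ∧ IsSmoothable B j l := by
  rintro ⟨j, i, k, l, hji, hjk, hjl, hik, hil, hkl,
    ⟨ha, hA⟩, ⟨hb, hB⟩, ⟨hc, hC⟩⟩
  obtain ⟨m1, hm1⟩ := hA k hjk.symm hik.symm
  obtain ⟨m2, hm2⟩ := hA l hjl.symm hil.symm
  obtain ⟨m3, hm3⟩ := hB i hji.symm hik
  obtain ⟨m4, hm4⟩ := hB l hjl.symm hkl.symm
  obtain ⟨m5, hm5⟩ := hC i hji.symm hil
  obtain ⟨m6, hm6⟩ := hC k hjk.symm hkl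
  rw [div_eq_iff ha] at hm1 hm2
  rw [div_eq_iff hb] at hm3 hm4
  rw [div_eq_iff hc] at hm5 hm6
  -- skew-symmetry rewrites
  have e1 : (m1 + 1 : ℂ) * B j i + (m3 + 1) * B j k = 0 := by
    linear_combination -hm1 - hm3 + hskew i k + hskew j k + hskew j i
  have e2 : (m2 + 1 : ℂ) * B j i + (m5 + 1) * B j l = 0 := by
    linear_combination -hm2 - hm5 + hskew i l + hskew j l + hskew j i
  have e3 : (m4 + 1 : ℂ) * B j k + (m6 + 1) * B j l = 0 := by
    linear_combination -hm4 - hm6 + hskew k l + hskew j l + hskew j k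
  have key : (((m4 + 1) * (m1 + 1) * (m5 + 1) + (m6 + 1) * (m2 + 1) * (m3 + 1) : ℕ) : ℂ)
      * B j i = 0 := by
    push_cast
    linear_combination (m4 + 1 : ℂ) * (m5 + 1) * e1 + (m6 + 1 : ℂ) * (m3 + 1) * e2
      - (m3 + 1 : ℂ) * (m5 + 1) * e3
  rcases mul_eq_zero.mp key with h | h
  · exact (Nat.cast_ne_zero.mpr (by positivity)) h
  · exact ha h
end

section
/- Let B = (b_{ij})_{i,j=0}^{n−1} be an n×n skew-symmetric matrix with complex entries, and let i, j, k ∈ {0,…,n−1} be pairwise distinct indices such that the edges {i,j} and {j,k} are both smoothable for B. Then b_{ij} is a positive rational multiple of b_{jk}; that is, there exists a positive rational number q such that b_{ij} = q · b_{jk}. -/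
open BigOperators Matrix

/-- If `{i,j}` and `{j,k}` are both smoothable edges for the
skew-symmetric matrix `B`, then `B i j` is a positive rational multiple of `B j k`. -/
theorem smoothable_edges_pos_rat_multiple {n : ℕ}
    (B : Matrix (Fin n) (Fin n) ℂ) (hskew : ∀ i j, B j i = -B i j)
    (i j k : Fin n) (hij : i ≠ j) (hjk : j ≠ k) (hik : i ≠ k)
    (h1 : IsSmoothable B i j) (h2 : IsSmoothable B j k) :
    ∃ q : ℚ, 0 < q ∧ B i j = (q : ℂ) * B j k := by
  obtain ⟨hBij, h1'⟩ := h1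
  obtain ⟨hBjk, h2'⟩ := h2
  obtain ⟨m, hm⟩ := h1' k hik.symm hjk.symm
  obtain ⟨m', hm'⟩ := h2' i hij hik
  rw [div_eq_iff hBij] at hm
  rw [div_eq_iff hBjk] at hm'
  refine ⟨(m' + 1) / (m + 1), by positivity, ?_⟩
  have key : ((m : ℂ) + 1) * B i j = ((m' : ℂ) + 1) * B j k := by
    linear_combination hm' - hm
  have hne : ((m : ℂ) + 1) ≠ 0 := by
    exact_mod_cast (Nat.cast_add_one_ne_zero m : ((m : ℂ) + 1) ≠ 0)
  have hq : ((((m' : ℚ) + 1) / ((m : ℚ) + 1) : ℚ) : ℂ) = ((m' : ℂ) + 1) / ((m : ℂ) + 1) := by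
    push_cast; ring
  rw [hq, div_mul_eq_mul_div, eq_div_iff hne]
  linear_combination key
end

section
/- Let B = (b_{ij})_{i,j=0}^{n−1} be an n×n skew-symmetric complex matrix each of whose rows sums to zero, and let i ≠ j be indices with b_{ij} ≠ 0. Set θ_{ijk} = (b_{jk} + b_{ki})/b_{ij} for k ∉ {i,j}. Then ∑_{k ∉ {i,j}} θ_{ijk} = 2. Consequently, if the edge {i,j} is smoothable for B, then exactly one of the following holds: (a) there is exactly one index k ∉ {i,j} with θ_{ijk} = 2 and θ_{ijl} = 0 for every other l ∉ {i,j}; or (b) there are exactly two distinct indices k₁, k₂ ∉ {i,j} with θ_{ijk₁} = θ_{ijk₂} = 1 and θ_{ijl} = 0 for every other l ∉ {i,j}. -/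
open BigOperators Matrix

lemma nat_sum_eq_two_cases {α : Type*} [DecidableEq α] (S : Finset α) (f : α → ℕ)
    (h : ∑ k ∈ S, f k = 2) :
    (∃ k ∈ S, f k = 2 ∧ ∀ l ∈ S, l ≠ k → f l = 0) ∨
    (∃ k₁ ∈ S, ∃ k₂ ∈ S, k₁ ≠ k₂ ∧ f k₁ = 1 ∧ f k₂ = 1 ∧
      ∀ l ∈ S, l ≠ k₁ → l ≠ k₂ → f l = 0) := by
  classical
  set T := S.filter (fun k => f k ≠ 0) with hT
  have hsumT : ∑ k ∈ T, f k = 2 := by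
    rw [hT, Finset.sum_filter_ne_zero]; exact h
  have hmemT : ∀ k, k ∈ T ↔ k ∈ S ∧ f k ≠ 0 := by
    intro k; simp [hT]
  have hone : ∀ k ∈ T, 1 ≤ f k := by intro k hk; have := (hmemT k).1 hk; omega
  have hcard : T.card ≤ 2 := by
    have h1 : T.card • 1 ≤ ∑ k ∈ T, f k := Finset.card_nsmul_le_sum T f 1 hone
    simpa [hsumT] using h1
  have hne : T.Nonempty := by
    by_contra hc
    rw [Finset.not_nonempty_iff_eq_empty] at hc
    simp [hc] at hsumT
  have hzero : ∀ l ∈ S, l ∉ T → f l = 0 := by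
    intro l hl hlT
    by_contra hc
    exact hlT ((hmemT l).2 ⟨hl, hc⟩)
  interval_cases hc : T.card
  · exact absurd (Finset.card_eq_zero.1 hc) hne.ne_empty
  · obtain ⟨k, hk⟩ := Finset.card_eq_one.1 hc
    left
    have hkT : k ∈ T := by simp [hk]
    refine ⟨k, ((hmemT k).1 hkT).1, ?_, ?_⟩
    · rw [hk, Finset.sum_singleton] at hsumT; exact hsumT
    · intro l hl hlk
      exact hzero l hl (by simp [hk, hlk])
  · obtain ⟨k₁, k₂, hk12, hk⟩ := Finset.card_eq_two.1 hc
    right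
    have hk1T : k₁ ∈ T := by simp [hk]
    have hk2T : k₂ ∈ T := by simp [hk]
    have hs : f k₁ + f k₂ = 2 := by
      rw [hk, Finset.sum_insert (by simpa using hk12), Finset.sum_singleton] at hsumT
      exact hsumT
    have h1 := hone k₁ hk1T
    have h2 := hone k₂ hk2T
    refine ⟨k₁, ((hmemT k₁).1 hk1T).1, k₂, ((hmemT k₂).1 hk2T).1, hk12, by omega, by omega, ?_⟩
    intro l hl h1' h2'
    exact hzero l hl (by simp [hk, h1', h2'])


/-- For a skew-symmetric matrix whose rows sum to zero and
`B i j ≠ 0`, the numbers `θ_{ijk} = (B j k + B k i)/(B i j)` for `k ∉ {i,j}` sum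
to `2`; hence if the edge `{i,j}` is smoothable, then exactly one of the following
holds: (a) exactly one `k` has `θ_{ijk} = 2` and all other `θ` vanish; or
(b) exactly two distinct `k₁, k₂` have `θ = 1` and all other `θ` vanish. -/
theorem theta_sum_eq_two_and_dichotomy {n : ℕ}
    (B : Matrix (Fin n) (Fin n) ℂ) (hskew : ∀ i j, B j i = -B i j)
    (hrow : ∀ i, ∑ j, B i j = 0)
    (i j : Fin n) (hij : i ≠ j) (hB : B i j ≠ 0) :
    (∑ k ∈ Finset.univ.filter (fun k : Fin n => k ≠ i ∧ k ≠ j),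
        (B j k + B k i) / B i j) = 2 ∧
    (IsSmoothable B i j →
      Xor'
        (∃ k : Fin n, k ≠ i ∧ k ≠ j ∧ (B j k + B k i) / B i j = 2 ∧
          ∀ l : Fin n, l ≠ i → l ≠ j → l ≠ k → (B j l + B l i) / B i j = 0)
        (∃ k₁ k₂ : Fin n, k₁ ≠ k₂ ∧ k₁ ≠ i ∧ k₁ ≠ j ∧ k₂ ≠ i ∧ k₂ ≠ j ∧
          (B j k₁ + B k₁ i) / B i j = 1 ∧ (B j k₂ + B k₂ i) / B i j = 1 ∧
          ∀ l : Fin n, l ≠ i → l ≠ j → l ≠ k₁ → l ≠ k₂ →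
            (B j l + B l i) / B i j = 0)) := by
  classical
  set S : Finset (Fin n) := Finset.univ.filter (fun k : Fin n => k ≠ i ∧ k ≠ j) with hSdef
  have hmemS : ∀ k, k ∈ S ↔ k ≠ i ∧ k ≠ j := by intro k; simp [hSdef]
  have hiS : i ∉ S := by simp [hmemS]
  have hjS : j ∉ S := by simp [hmemS]
  have hjins : j ∉ insert i S := by
    simp [Finset.mem_insert, hmemS, hij.symm]
  have huniv : (Finset.univ : Finset (Fin n)) = insert j (insert i S) := by
    ext k
    simp only [Finset.mem_univ, true_iff, Finset.mem_insert, hmemS]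
    tauto
  have hii : B i i = 0 := by linear_combination (1/2 : ℂ) * hskew i i
  have hjj : B j j = 0 := by linear_combination (1/2 : ℂ) * hskew j j
  have hiins : i ∉ S := hiS
  -- row sums over S
  have hsumj : ∑ k ∈ S, B j k = B i j := by
    have h0 := hrow j
    rw [huniv, Finset.sum_insert hjins, Finset.sum_insert hiS] at h0
    linear_combination h0 - hskew i j - hjj
  have hsumi : ∑ k ∈ S, B k i = B i j := by
    have h0 : ∑ k, B k i = 0 := by
      have : ∑ k, B k i = ∑ k, -(B i k) :=
        Finset.sum_congr rfl fun k _ => hskew i k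
      rw [this, Finset.sum_neg_distrib, hrow i, neg_zero]
    rw [huniv, Finset.sum_insert hjins, Finset.sum_insert hiS] at h0
    linear_combination h0 - hskew i j - hii
  have hsum : (∑ k ∈ S, (B j k + B k i) / B i j) = 2 := by
    rw [← Finset.sum_div, Finset.sum_add_distrib, hsumj, hsumi]
    field_simp
    ring
  refine ⟨hsum, ?_⟩
  intro hSm
  -- extract natural numbers
  set f : Fin n → ℕ := fun k =>
    if hk : k ≠ i ∧ k ≠ j then (hSm.2 k hk.1 hk.2).choose else 0 with hfdef
  have hfspec : ∀ k, k ≠ i → k ≠ j → (B j k + B k i) / B i j = (f k : ℂ) := by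
    intro k h1 h2
    have : f k = (hSm.2 k h1 h2).choose := by
      simp only [hfdef]; rw [dif_pos ⟨h1, h2⟩]
    rw [this]
    exact (hSm.2 k h1 h2).choose_spec
  have hfsum : ∑ k ∈ S, f k = 2 := by
    have hc : ((∑ k ∈ S, f k : ℕ) : ℂ) = ((2 : ℕ) : ℂ) := by
      push_cast
      rw [← hsum]
      refine Finset.sum_congr rfl fun k hk => ?_
      obtain ⟨h1, h2⟩ := (hmemS k).1 hk
      exact (hfspec k h1 h2).symm
    exact_mod_cast hc
  rcases nat_sum_eq_two_cases S f hfsum with ⟨k, hkS, hk2, hrest⟩ | ⟨k₁, hk1S, k₂, hk2S, h12, hv1, hv2, hrest⟩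
  · left
    obtain ⟨hki, hkj⟩ := (hmemS k).1 hkS
    constructor
    · refine ⟨k, hki, hkj, ?_, ?_⟩
      · rw [hfspec k hki hkj, hk2]; norm_num
      · intro l h1 h2 h3
        rw [hfspec l h1 h2, hrest l ((hmemS l).2 ⟨h1, h2⟩) h3]; norm_num
    · rintro ⟨k₁, k₂, h12, h1i, h1j, h2i, h2j, hv1, hv2, -⟩
      rcases ne_or_eq k₁ k with h | h
      · have := hfspec k₁ h1i h1j
        have h0 : f k₁ = 0 := hrest k₁ ((hmemS k₁).2 ⟨h1i, h1j⟩) h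
        rw [this, h0] at hv1
        norm_num at hv1
      · have h2k : k₂ ≠ k := by rw [← h]; exact h12.symm
        have := hfspec k₂ h2i h2j
        have h0 : f k₂ = 0 := hrest k₂ ((hmemS k₂).2 ⟨h2i, h2j⟩) h2k
        rw [this, h0] at hv2
        norm_num at hv2
  · right
    obtain ⟨h1i, h1j⟩ := (hmemS k₁).1 hk1S
    obtain ⟨h2i, h2j⟩ := (hmemS k₂).1 hk2S
    constructor
    · refine ⟨k₁, k₂, h12, h1i, h1j, h2i, h2j, ?_, ?_, ?_⟩
      · rw [hfspec k₁ h1i h1j, hv1]; norm_num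
      · rw [hfspec k₂ h2i h2j, hv2]; norm_num
      · intro l hl1 hl2 hl3 hl4
        rw [hfspec l hl1 hl2, hrest l ((hmemS l).2 ⟨hl1, hl2⟩) hl3 hl4]; norm_num
    · rintro ⟨k, hki, hkj, hk2', hrest'⟩
      rcases ne_or_eq k₁ k with h | h
      · have hz := hrest' k₁ h1i h1j h
        rw [hfspec k₁ h1i h1j, hv1] at hz
        norm_num at hz
      · have h2k : k₂ ≠ k := by rw [← h]; exact h12.symm
        have hz := hrest' k₂ h2i h2j h2k
        rw [hfspec k₂ h2i h2j, hv2] at hz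
        norm_num at hz
end

section
/- Let n ≥ 3, let 1 ≤ k < n/2, let d = gcd(n,k), and let I = (i_0,…,i_{d−1}) be a sequence of zeros and ones with i_s ≤ k − 1 for every s. Then the matrix C_{n,k,I} is skew-symmetric, each of its rows sums to zero, and for every i ∈ {0,…,n−1} the edge {i, (i+1) mod n} is smoothable for C_{n,k,I}; in particular C_{n,k,I} has a full smoothable cycle. -/
set_option linter.unusedTactic false


open BigOperators Matrix

/-- `B` has a *full smoothable cycle*: there is a permutation `σ` of `{0,…,n−1}`
such that every edge `{σ(i), σ((i+1) mod n)}` is smoothable for `B`. -/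
def HasFullSmoothableCycle {n : ℕ} (B : Matrix (Fin n) (Fin n) ℂ) : Prop :=
  ∃ σ : Equiv.Perm (Fin n), ∀ i : Fin n,
    IsSmoothable B (σ i)
      (σ ⟨(i.val + 1) % n, Nat.mod_lt _ (Nat.lt_of_le_of_lt (Nat.zero_le _) i.isLt)⟩)

/-- The vector `r(l) ∈ ℂ^n`: `r(l)_0 = 0`, `r(l)_m = 1` for `1 ≤ m ≤ l`,
`r(l)_m = −1` for `n − l ≤ m ≤ n−1`, and `r(l)_m = 0` otherwise. -/
def rVec (n l m : ℕ) : ℂ :=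
  if m = 0 then 0 else if m ≤ l then 1 else if n - l ≤ m then -1 else 0

/-- The matrix `C_{n,k,I}` for a sequence `I` of zeros and ones of length
`d = gcd(n,k)`: its `i`-th row is `T^i(r(k − I(i mod d)))`. -/
def CnkI (n k : ℕ) (I : ℕ → ℕ) : Matrix (Fin n) (Fin n) ℂ :=
  Matrix.of fun i j => rVec n (k - I (i.val % Nat.gcd n k)) ((j.val + n - i.val) % n)

lemma mod_sub_lemma (n i j : ℕ) (hi : i < n) (hj : j < n) :
    (j + n - i) % n = if i ≤ j then j - i else j + n - i := by
  rcases le_or_gt i j with h | h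
  · rw [if_pos h, show j + n - i = (j - i) + n by omega, Nat.add_mod_right,
      Nat.mod_eq_of_lt (by omega)]
  · rw [if_neg (by omega), Nat.mod_eq_of_lt (by omega)]

lemma skew_aux (n k l l' a : ℕ) (hk1 : 1 ≤ k) (hk2 : 2*k < n)
    (hl1 : k - 1 ≤ l) (hl2 : l ≤ k) (hl1' : k - 1 ≤ l') (hl2' : l' ≤ k)
    (ha1 : 1 ≤ a) (ha2 : a < n)
    (hcrit : a = k ∨ a = n - k → l = l') :
    rVec n l' (n - a) = - rVec n l a := by
  unfold rVec
  split_ifs <;> first | (exfalso; omega) | norm_num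

lemma mod_gcd_eq (n k i j a : ℕ) (hn : 0 < n) (hi : i < n) (hj : j < n)
    (ha : (j + n - i) % n = a) (hda : Nat.gcd n k ∣ a) (han : a ≤ n) :
    i % Nat.gcd n k = j % Nat.gcd n k := by
  set d := Nat.gcd n k with hd
  have hdn : d ∣ n := Nat.gcd_dvd_left n k
  have hd0 : 0 < d := Nat.gcd_pos_of_pos_left k hn
  obtain ⟨e, he⟩ := hda
  obtain ⟨f, hf⟩ := hdn
  rw [mod_sub_lemma n i j hi hj] at ha
  rcases le_or_gt i j with h | h
  · rw [if_pos h] at ha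
    have hj' : j = i + d * e := by omega
    rw [hj', Nat.add_mul_mod_self_left]
  · rw [if_neg (by omega)] at ha
    have hef : e ≤ f := Nat.le_of_mul_le_mul_left (by omega) hd0
    have key : d * (f - e) + d * e = d * f := by
      rw [← Nat.mul_add]; congr 1; omega
    have hi' : i = j + d * (f - e) := by omega
    rw [hi', Nat.add_mul_mod_self_left]

lemma smooth_aux (n k l l' m : ℕ) (hk1 : 1 ≤ k) (hk2 : 2*k < n)
    (hl1 : k - 1 ≤ l) (hl2 : l ≤ k) (hl1' : k - 1 ≤ l') (hl2' : l' ≤ k)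
    (hm1 : 2 ≤ m) (hm2 : m < n) :
    ∃ p : ℕ, rVec n l' (m - 1) - rVec n l m = (p : ℂ) := by
  unfold rVec
  split_ifs <;> first
    | (exfalso; omega)
    | (refine ⟨0, ?_⟩; norm_num; done)
    | (refine ⟨1, ?_⟩; norm_num; done)
    | (refine ⟨2, ?_⟩; norm_num; done)

lemma rVec_sum (n l : ℕ) (hn : 0 < n) (hl : 2 * l < n) :
    ∑ m ∈ Finset.range n, rVec n l m = 0 := by
  have step : ∀ m ∈ Finset.range n, rVec n l m =
      (if m ∈ Finset.Icc 1 l then (1:ℂ) else 0)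
      + (if m ∈ Finset.Icc (n-l) (n-1) then (-1:ℂ) else 0) := by
    intro m hm
    simp only [Finset.mem_range] at hm
    unfold rVec
    simp only [Finset.mem_Icc]
    split_ifs <;> first | (exfalso; omega) | norm_num
  rw [Finset.sum_congr rfl step, Finset.sum_add_distrib,
    Finset.sum_ite_mem, Finset.sum_ite_mem]
  have hs1 : Finset.range n ∩ Finset.Icc 1 l = Finset.Icc 1 l := by
    apply Finset.inter_eq_right.2
    intro m hm
    simp only [Finset.mem_Icc] at hm
    exact Finset.mem_range.2 (by omega)
  have hs2 : Finset.range n ∩ Finset.Icc (n-l) (n-1) = Finset.Icc (n-l) (n-1) := by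
    apply Finset.inter_eq_right.2
    intro m hm
    simp only [Finset.mem_Icc] at hm
    exact Finset.mem_range.2 (by omega)
  rw [hs1, hs2, Finset.sum_const, Finset.sum_const, Nat.card_Icc, Nat.card_Icc]
  have h1 : l + 1 - 1 = l := by omega
  have h2 : n - 1 + 1 - (n - l) = l := by omega
  rw [h1, h2]
  simp


/-- For `n ≥ 3`, `1 ≤ k < n/2` and a sequence `I` of zeros and
ones of length `d = gcd(n,k)` with each `i_s ≤ k − 1`, the matrix `C_{n,k,I}` is
skew-symmetric, its rows sum to zero, every edge `{i, (i+1) mod n}` is smoothable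
for it, and it has a full smoothable cycle. -/
theorem CnkI_has_full_smoothable_cycle (n k : ℕ) (hn : 3 ≤ n)
    (hk1 : 1 ≤ k) (hk2 : 2 * k < n)
    (I : ℕ → ℕ) (hI : ∀ s < Nat.gcd n k, I s ≤ 1 ∧ I s + 1 ≤ k) :
    (∀ i j, CnkI n k I j i = -CnkI n k I i j) ∧
    (∀ i, ∑ j, CnkI n k I i j = 0) ∧
    (∀ i : Fin n,
      IsSmoothable (CnkI n k I) i ⟨(i.val + 1) % n, Nat.mod_lt _ (by omega)⟩) ∧
    HasFullSmoothableCycle (CnkI n k I) := by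
  have hn0 : 0 < n := by omega
  have hd0 : 0 < Nat.gcd n k := Nat.gcd_pos_of_pos_left k hn0
  -- properties of L i := k - I (i % Nat.gcd n k)
  have hL : ∀ i : ℕ, k - 1 ≤ k - I (i % Nat.gcd n k) ∧ k - I (i % Nat.gcd n k) ≤ k
      ∧ 1 ≤ k - I (i % Nat.gcd n k) := by
    intro i
    have := hI (i % Nat.gcd n k) (Nat.mod_lt _ hd0)
    omega
  -- skew-symmetry
  have hskew : ∀ i j : Fin n, CnkI n k I j i = -CnkI n k I i j := by
    intro i j
    by_cases hij : i = j
    · subst hij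
      simp [CnkI, rVec, Nat.add_sub_cancel_left, Nat.mod_self]
    · have hvij : i.val ≠ j.val := fun h => hij (Fin.ext h)
      have e1 := mod_sub_lemma n i.val j.val i.isLt j.isLt
      have e2 := mod_sub_lemma n j.val i.val j.isLt i.isLt
      have ha : (i.val + n - j.val) % n = n - ((j.val + n - i.val) % n) ∧
          1 ≤ (j.val + n - i.val) % n ∧ (j.val + n - i.val) % n < n := by
        constructor
        · split_ifs at e1 e2 <;> omega
        constructor
        · split_ifs at e1 <;> omega
        · exact Nat.mod_lt _ hn0
      simp only [CnkI, Matrix.of_apply]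
      rw [ha.1]
      apply skew_aux n k _ _ _ hk1 hk2 (hL i.val).1 (hL i.val).2.1 (hL j.val).1
        (hL j.val).2.1 ha.2.1 ha.2.2
      intro hcrit
      have hmod : i.val % Nat.gcd n k = j.val % Nat.gcd n k := by
        rcases hcrit with hc | hc
        · exact mod_gcd_eq n k i.val j.val _ hn0 i.isLt j.isLt rfl
            (hc ▸ Nat.gcd_dvd_right n k) (by omega)
        · exact mod_gcd_eq n k i.val j.val _ hn0 i.isLt j.isLt rfl
            (hc ▸ Nat.dvd_sub (Nat.gcd_dvd_left n k) (Nat.gcd_dvd_right n k)) (by omega)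
      rw [hmod]
  -- row sums
  have hsum : ∀ i, ∑ j, CnkI n k I i j = 0 := by
    intro i
    have : NeZero n := ⟨by omega⟩
    have hre : ∀ j : Fin n, CnkI n k I i j
        = rVec n (k - I (i.val % Nat.gcd n k)) ((j - i : Fin n).val) := by
      intro j
      simp only [CnkI, Matrix.of_apply, Fin.sub_def]
      congr 2
      omega
    calc ∑ j, CnkI n k I i j
        = ∑ j : Fin n, rVec n (k - I (i.val % Nat.gcd n k)) ((j - i : Fin n).val) :=
          Finset.sum_congr rfl fun j _ => hre j
      _ = ∑ j : Fin n, rVec n (k - I (i.val % Nat.gcd n k)) (j : ℕ) :=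
          Fintype.sum_equiv (Equiv.subRight i) _ _ (fun j => rfl)
      _ = ∑ m ∈ Finset.range n, rVec n (k - I (i.val % Nat.gcd n k)) m :=
          Fin.sum_univ_eq_sum_range _ n
      _ = 0 := rVec_sum n _ hn0 (by have := hL i.val; omega)
  -- smoothable edges
  have hsm : ∀ i : Fin n,
      IsSmoothable (CnkI n k I) i ⟨(i.val + 1) % n, Nat.mod_lt _ (by omega)⟩ := by
    intro i
    set j : Fin n := ⟨(i.val + 1) % n, Nat.mod_lt _ (by omega)⟩ with hjdef
    have hjv : (i.val + 1 < n ∧ j.val = i.val + 1) ∨ (i.val + 1 = n ∧ j.val = 0) := by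
      have hj : j.val = (i.val + 1) % n := rfl
      rcases lt_or_ge (i.val + 1) n with h | h
      · exact Or.inl ⟨h, by rw [hj, Nat.mod_eq_of_lt h]⟩
      · have h' : i.val + 1 = n := by omega
        exact Or.inr ⟨h', by rw [hj, h', Nat.mod_self]⟩
    have harg : (j.val + n - i.val) % n = 1 := by
      have e := mod_sub_lemma n i.val j.val i.isLt j.isLt
      split_ifs at e <;> omega
    have hBij : CnkI n k I i j = 1 := by
      simp only [CnkI, Matrix.of_apply, harg]
      unfold rVec
      rw [if_neg (show ¬(1 = 0) by omega),
        if_pos (show 1 ≤ k - I (i.val % Nat.gcd n k) by exact (hL i.val).2.2)]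
    constructor
    · rw [hBij]; exact one_ne_zero
    · intro c hci hcj
      rw [hBij, div_one, hskew i c]
      have hvci : c.val ≠ i.val := fun h => hci (Fin.ext h)
      have hvcj : c.val ≠ j.val := fun h => hcj (Fin.ext h)
      set m := (c.val + n - i.val) % n with hm
      have hm2 : 2 ≤ m ∧ m < n := by
        have e := mod_sub_lemma n i.val c.val i.isLt c.isLt
        constructor
        · split_ifs at e <;> omega
        · exact Nat.mod_lt _ hn0
      have hstep : (c.val + n - j.val) % n = m - 1 := by
        have e1 := mod_sub_lemma n j.val c.val j.isLt c.isLt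
        have e2 := mod_sub_lemma n i.val c.val i.isLt c.isLt
        split_ifs at e1 e2 <;> omega
      simp only [CnkI, Matrix.of_apply, hstep, ← hm]
      have h1 := hL j.val
      have h2 := hL i.val
      have := smooth_aux n k (k - I (i.val % Nat.gcd n k)) (k - I (j.val % Nat.gcd n k)) m hk1 hk2
        h2.1 h2.2.1 h1.1 h1.2.1 hm2.1 hm2.2
      obtain ⟨p, hp⟩ := this
      exact ⟨p, by rw [← hp]; ring⟩
  exact ⟨hskew, hsum, hsm, ⟨Equiv.refl _, fun i => hsm i⟩⟩
end

section
/- Let k ≥ 1 and n = 2(2k+1). Then the matrix Y_n is skew-symmetric, each of its rows sums to zero, and for every i ∈ {0,…,n−1} the edge {i, (i+1) mod n} is smoothable for Y_n; in particular Y_n has a full smoothable cycle. -/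
open BigOperators Matrix

/-- Row `r_0` of `Y_n`: `(0, 2, 1^{n/2−2}, (−1)^{n/2})`. -/
def yRow0 (n t : ℕ) : ℂ :=
  if t = 0 then 0 else if t = 1 then 2 else if t < n / 2 then 1 else -1

/-- Row `r_1` of `Y_n`: `(−2, 0, 1^{n/2}, (−1)^{n/2−2})`. -/
def yRow1 (n t : ℕ) : ℂ :=
  if t = 0 then -2 else if t = 1 then 0 else if t < n / 2 + 2 then 1 else -1

/-- The matrix `Y_n` (for `n = 2(2k+1)`): rows `r_0`, `r_1` as above and
`r_i = T²(r_{i−2})` for `2 ≤ i ≤ n−1`. -/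
def Ymat (n : ℕ) : Matrix (Fin n) (Fin n) ℂ :=
  Matrix.of fun i j =>
    if i.val % 2 = 0 then yRow0 n ((j.val + n - i.val) % n)
    else yRow1 n ((j.val + n - (i.val - 1)) % n)

lemma modsub {n b c : ℕ} (hb : b < n) (hc : c ≤ n) :
    (b + n - c) % n = if c ≤ b then b - c else b + n - c := by
  split
  · rw [show b + n - c = (b - c) + n by omega, Nat.add_mod_right,
      Nat.mod_eq_of_lt (by omega)]
  · rw [Nat.mod_eq_of_lt (by omega)]

def Yval (n p d : ℕ) : ℂ :=
  if p = 0 then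
    (if d = 0 then 0 else if d = 1 then 2 else if d < n / 2 then 1 else -1)
  else
    (if d = 0 then 0 else if d = n - 1 then -2 else if d ≤ n / 2 then 1 else -1)

lemma Ymat_eval {n : ℕ} (hn2 : 2 < n) (i j : Fin n) :
    Ymat n i j = Yval n (i.val % 2) ((j.val + n - i.val) % n) := by
  obtain ⟨a, ha⟩ := i; obtain ⟨b, hb⟩ := j
  simp only [Ymat, Matrix.of_apply, Yval]
  have h2 : a % 2 = 0 ∨ a % 2 = 1 := by omega
  rcases h2 with h2 | h2
  · rw [if_pos h2, if_pos h2]; rfl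
  · rw [if_neg (by omega : ¬ a % 2 = 0), if_neg (by omega : ¬ a % 2 = 0)]
    have key : (b + n - (a - 1)) % n = ((b + n - a) % n + 1) % n := by
      rw [show b + n - (a-1) = (b + n - a) + 1 by omega,
        Nat.add_mod (b + n - a) 1 n, Nat.mod_eq_of_lt (show 1 < n by omega)]
    rw [key]
    set d := (b + n - a) % n with hd
    have hdn : d < n := Nat.mod_lt _ (by omega)
    clear_value d
    clear hd key
    by_cases h0 : d = n - 1
    · rw [h0, show (n - 1 + 1) = n by omega, Nat.mod_self]
      unfold yRow1
      split_ifs <;> first | omega | contradiction | norm_num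
    · rw [Nat.mod_eq_of_lt (by omega : d + 1 < n)]
      unfold yRow1
      split_ifs <;> first | omega | contradiction | norm_num

set_option maxHeartbeats 1000000 in
lemma Ymat_skew (k n : ℕ) (hk : 1 ≤ k) (hn : n = 2 * (2 * k + 1)) :
    ∀ i j : Fin n, Ymat n j i = -Ymat n i j := by
  intro i j
  have ha : i.val < n := i.isLt
  have hb : j.val < n := j.isLt
  rw [Ymat_eval (by omega) j i, Ymat_eval (by omega) i j,
    modsub ha (by omega : j.val ≤ n), modsub hb (by omega : i.val ≤ n)]
  unfold Yval
  split_ifs <;> first | omega | contradiction | norm_num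

lemma Yval_sum0 {n k : ℕ} (hk : 1 ≤ k) (hn : n = 2 * (2 * k + 1)) :
    ∑ t ∈ Finset.range n, Yval n 0 t = 0 := by
  obtain ⟨k', rfl⟩ : ∃ k', k = k' + 1 := ⟨k - 1, by omega⟩
  have h1 : ∑ t ∈ Finset.Ico 0 2, Yval n 0 t + ∑ t ∈ Finset.Ico 2 (n/2), Yval n 0 t
      = ∑ t ∈ Finset.Ico 0 (n/2), Yval n 0 t :=
    Finset.sum_Ico_consecutive _ (by omega) (by omega)
  have h2 : ∑ t ∈ Finset.Ico 0 (n/2), Yval n 0 t + ∑ t ∈ Finset.Ico (n/2) n, Yval n 0 t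
      = ∑ t ∈ Finset.Ico 0 n, Yval n 0 t :=
    Finset.sum_Ico_consecutive _ (by omega) (by omega)
  rw [Finset.range_eq_Ico, ← h2, ← h1]
  have e0 : ∑ t ∈ Finset.Ico 0 2, Yval n 0 t = 2 := by
    rw [← Finset.range_eq_Ico, Finset.sum_range_succ, Finset.sum_range_one]
    unfold Yval; norm_num
  have e1 : ∑ t ∈ Finset.Ico 2 (n/2), Yval n 0 t = ((n/2 - 2 : ℕ) : ℂ) := by
    have hc : ∀ x ∈ Finset.Ico 2 (n/2), Yval n 0 x = 1 := by
      intro x hx; rw [Finset.mem_Ico] at hx; unfold Yval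
      rw [if_pos rfl, if_neg (by omega), if_neg (by omega), if_pos (by omega)]
    rw [Finset.sum_congr rfl hc, Finset.sum_const, Nat.card_Ico, nsmul_eq_mul, mul_one]
  have e2 : ∑ t ∈ Finset.Ico (n/2) n, Yval n 0 t = -((n - n/2 : ℕ) : ℂ) := by
    have hc : ∀ x ∈ Finset.Ico (n/2) n, Yval n 0 x = -1 := by
      intro x hx; rw [Finset.mem_Ico] at hx; unfold Yval
      rw [if_pos rfl, if_neg (by omega), if_neg (by omega), if_neg (by omega)]
    rw [Finset.sum_congr rfl hc, Finset.sum_const, Nat.card_Ico, nsmul_eq_mul,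
      mul_neg_one]
  rw [e0, e1, e2, show n/2 - 2 = 2*k'+1 by omega, show n - n/2 = 2*k'+3 by omega]
  push_cast; ring

lemma Yval_sum1 {n k : ℕ} (hk : 1 ≤ k) (hn : n = 2 * (2 * k + 1)) :
    ∑ t ∈ Finset.range n, Yval n 1 t = 0 := by
  obtain ⟨k', rfl⟩ : ∃ k', k = k' + 1 := ⟨k - 1, by omega⟩
  have h1 : ∑ t ∈ Finset.Ico 0 1, Yval n 1 t + ∑ t ∈ Finset.Ico 1 (n/2+1), Yval n 1 t
      = ∑ t ∈ Finset.Ico 0 (n/2+1), Yval n 1 t :=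
    Finset.sum_Ico_consecutive _ (by omega) (by omega)
  have h2 : ∑ t ∈ Finset.Ico 0 (n/2+1), Yval n 1 t + ∑ t ∈ Finset.Ico (n/2+1) (n-1), Yval n 1 t
      = ∑ t ∈ Finset.Ico 0 (n-1), Yval n 1 t :=
    Finset.sum_Ico_consecutive _ (by omega) (by omega)
  have h3 : ∑ t ∈ Finset.Ico 0 (n-1), Yval n 1 t + ∑ t ∈ Finset.Ico (n-1) n, Yval n 1 t
      = ∑ t ∈ Finset.Ico 0 n, Yval n 1 t :=
    Finset.sum_Ico_consecutive _ (by omega) (by omega)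
  rw [Finset.range_eq_Ico, ← h3, ← h2, ← h1]
  have e0 : ∑ t ∈ Finset.Ico 0 1, Yval n 1 t = 0 := by
    rw [← Finset.range_eq_Ico, Finset.sum_range_one]
    unfold Yval; norm_num
  have e1 : ∑ t ∈ Finset.Ico 1 (n/2+1), Yval n 1 t = ((n/2 : ℕ) : ℂ) := by
    have hc : ∀ x ∈ Finset.Ico 1 (n/2+1), Yval n 1 x = 1 := by
      intro x hx; rw [Finset.mem_Ico] at hx; unfold Yval
      rw [if_neg (by omega), if_neg (by omega), if_neg (by omega), if_pos (by omega)]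
    rw [Finset.sum_congr rfl hc, Finset.sum_const, Nat.card_Ico, nsmul_eq_mul, mul_one]
    norm_num
  have e2 : ∑ t ∈ Finset.Ico (n/2+1) (n-1), Yval n 1 t = -((n - 1 - (n/2+1) : ℕ) : ℂ) := by
    have hc : ∀ x ∈ Finset.Ico (n/2+1) (n-1), Yval n 1 x = -1 := by
      intro x hx; rw [Finset.mem_Ico] at hx; unfold Yval
      rw [if_neg (by omega), if_neg (by omega), if_neg (by omega), if_neg (by omega)]
    rw [Finset.sum_congr rfl hc, Finset.sum_const, Nat.card_Ico, nsmul_eq_mul, mul_neg_one]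
  have e3 : ∑ t ∈ Finset.Ico (n-1) n, Yval n 1 t = -2 := by
    have hs : Finset.Ico (n-1) n = {n-1} := by
      ext x; simp only [Finset.mem_Ico, Finset.mem_singleton]; omega
    rw [hs, Finset.sum_singleton]
    unfold Yval
    rw [if_neg (by omega), if_neg (by omega), if_pos rfl]
  rw [e0, e1, e2, e3, show n - 1 - (n/2+1) = 2*k'+1 by omega, show n/2 = 2*k'+3 by omega]
  push_cast; ring

lemma Ymat_rowsum (k n : ℕ) (hk : 1 ≤ k) (hn : n = 2 * (2 * k + 1)) (i : Fin n) :
    ∑ j, Ymat n i j = 0 := by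
  haveI : NeZero n := ⟨by omega⟩
  have key : ∀ j : Fin n, Ymat n i j = Yval n (i.val % 2) ((j - i).val) := by
    intro j
    rw [Ymat_eval (by omega) i j, Fin.sub_def]
    congr 2
    omega
  calc ∑ j, Ymat n i j
      = ∑ j : Fin n, Yval n (i.val % 2) ((j - i).val) :=
        Finset.sum_congr rfl (fun j _ => key j)
    _ = ∑ t : Fin n, Yval n (i.val % 2) t.val :=
        Fintype.sum_equiv (Equiv.subRight i) _ _ (fun j => rfl)
    _ = ∑ t ∈ Finset.range n, Yval n (i.val % 2) t := Fin.sum_univ_eq_sum_range _ n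
    _ = 0 := by
        have h : i.val % 2 = 0 ∨ i.val % 2 = 1 := by omega
        rcases h with h | h <;> rw [h]
        · exact Yval_sum0 hk hn
        · exact Yval_sum1 hk hn

set_option maxHeartbeats 4000000 in
lemma Ymat_smooth (k n : ℕ) (hk : 1 ≤ k) (hn : n = 2 * (2 * k + 1)) (i j : Fin n)
    (hj : j.val = (i.val + 1) % n) : IsSmoothable (Ymat n) i j := by
  have ha : i.val < n := i.isLt
  by_cases hlast : i.val = n - 1
  · -- i = n-1, j = 0
    have hj0 : j.val = 0 := by
      rw [hj, hlast, show n - 1 + 1 = n by omega, Nat.mod_self]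
    clear hj
    have hodd : i.val % 2 = 1 := by omega
    have hBij : Ymat n i j = 1 := by
      rw [Ymat_eval (by omega) i j, modsub j.isLt (by omega), hj0, hodd]
      unfold Yval
      split_ifs <;> first | omega | contradiction | norm_num
    refine ⟨by rw [hBij]; norm_num, fun kk hki hkj => ?_⟩
    have hc1 : kk.val ≠ i.val := fun h => hki (Fin.ext h)
    have hc2 : kk.val ≠ j.val := fun h => hkj (Fin.ext h)
    have hck : kk.val < n := kk.isLt
    rw [Ymat_eval (by omega) j kk, Ymat_eval (by omega) kk i, hBij,
      modsub kk.isLt (by omega : j.val ≤ n), modsub i.isLt (by omega : kk.val ≤ n),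
      hj0, hlast]
    rw [hj0] at hc2
    rcases (by omega : kk.val % 2 = 0 ∨ kk.val % 2 = 1) with hpk | hpk <;>
    unfold Yval <;>
    simp only [hpk, Nat.zero_mod, reduceIte] <;>
    split_ifs <;>
      first
        | contradiction
        | (exfalso; omega)
        | (refine ⟨0, ?_⟩; norm_num; done)
        | (refine ⟨1, ?_⟩; norm_num; done)
  · -- j = i+1
    have hj1 : j.val = i.val + 1 := by rw [hj]; exact Nat.mod_eq_of_lt (by omega)
    clear hj
    have h2 : i.val % 2 = 0 ∨ i.val % 2 = 1 := by omega
    have hBij : Ymat n i j = if i.val % 2 = 0 then 2 else 1 := by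
      rw [Ymat_eval (by omega) i j, modsub j.isLt (by omega), hj1]
      unfold Yval
      split_ifs <;> first | omega | contradiction | norm_num
    refine ⟨by rw [hBij]; split_ifs <;> norm_num, fun kk hki hkj => ?_⟩
    have hc1 : kk.val ≠ i.val := fun h => hki (Fin.ext h)
    have hc2 : kk.val ≠ j.val := fun h => hkj (Fin.ext h)
    have hck : kk.val < n := kk.isLt
    rw [hj1] at hc2
    rcases h2 with he | ho
    · have hBij2 : Ymat n i j = 2 := by rw [hBij, if_pos he]
      have hpj : (i.val + 1) % 2 = 1 := by omega
      rw [Ymat_eval (by omega) j kk, Ymat_eval (by omega) kk i, hBij2,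
        modsub kk.isLt (by omega : j.val ≤ n), modsub i.isLt (by omega : kk.val ≤ n),
        hj1]
      rcases (by omega : kk.val % 2 = 0 ∨ kk.val % 2 = 1) with hpk | hpk <;>
      unfold Yval <;>
      simp only [hpk, hpj, reduceIte] <;>
      split_ifs <;>
        first
          | contradiction
          | (exfalso; omega)
          | (refine ⟨0, ?_⟩; norm_num; done)
          | (refine ⟨1, ?_⟩; norm_num; done)
    · have hBij1 : Ymat n i j = 1 := by rw [hBij, if_neg (by omega)]
      have hpj : (i.val + 1) % 2 = 0 := by omega
      rw [Ymat_eval (by omega) j kk, Ymat_eval (by omega) kk i, hBij1,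
        modsub kk.isLt (by omega : j.val ≤ n), modsub i.isLt (by omega : kk.val ≤ n),
        hj1]
      rcases (by omega : kk.val % 2 = 0 ∨ kk.val % 2 = 1) with hpk | hpk <;>
      unfold Yval <;>
      simp only [hpk, hpj, reduceIte] <;>
      split_ifs <;>
        first
          | contradiction
          | (exfalso; omega)
          | (refine ⟨0, ?_⟩; norm_num; done)
          | (refine ⟨1, ?_⟩; norm_num; done)

/-- For `k ≥ 1` and `n = 2(2k+1)`, the matrix `Y_n` is
skew-symmetric, its rows sum to zero, every edge `{i, (i+1) mod n}` is smoothable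
for it, and it has a full smoothable cycle. -/
theorem Ymat_has_full_smoothable_cycle (k n : ℕ) (hk : 1 ≤ k)
    (hn : n = 2 * (2 * k + 1)) :
    (∀ i j, Ymat n j i = -Ymat n i j) ∧
    (∀ i, ∑ j, Ymat n i j = 0) ∧
    (∀ i : Fin n,
      IsSmoothable (Ymat n) i ⟨(i.val + 1) % n, Nat.mod_lt _ (by omega)⟩) ∧
    HasFullSmoothableCycle (Ymat n) := by
  refine ⟨Ymat_skew k n hk hn, fun i => Ymat_rowsum k n hk hn i,
    fun i => Ymat_smooth k n hk hn i _ rfl,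
    ⟨Equiv.refl _, fun i => Ymat_smooth k n hk hn i _ rfl⟩⟩
end

section
/- Let n ≥ 3 and let B = (b_{ij})_{i,j=0}^{n−1} be an n×n skew-symmetric complex matrix each of whose rows sums to zero. Suppose that for every i ∈ {0,…,n−1} the edge {i, (i+1) mod n} is smoothable for B and that b_{i,(i+1) mod n} = 1 for every i. Then there exist an integer 1 ≤ k < n/2, a sequence I = (i_0,…,i_{d−1}) of zeros and ones of length d = gcd(n,k), and an integer c such that b_{ij} = (C_{n,k,I})_{(i+c) mod n, (j+c) mod n} for all i, j ∈ {0,…,n−1}. -/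
open BigOperators Matrix

namespace SmAux

variable {n : ℕ}

lemma pos3 {n : ℕ} (hn : 3 ≤ n) : 0 < n := Nat.lt_of_lt_of_le (by norm_num) hn

def bF (hn : 0 < n) (B : Matrix (Fin n) (Fin n) ℂ) (i j : ℕ) : ℂ :=
  B ⟨i % n, Nat.mod_lt _ hn⟩ ⟨j % n, Nat.mod_lt _ hn⟩

lemma bF_congr (hn : 0 < n) (B : Matrix (Fin n) (Fin n) ℂ) {i j i' j' : ℕ}
    (hi : i % n = i' % n) (hj : j % n = j' % n) :
    bF hn B i j = bF hn B i' j' := by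
  unfold bF; congr 1 <;> exact Fin.ext (by simp [hi, hj])

lemma bF_skew (hn : 0 < n) (B : Matrix (Fin n) (Fin n) ℂ)
    (hskew : ∀ i j, B j i = -B i j) (i j : ℕ) :
    bF hn B j i = -bF hn B i j := hskew _ _

lemma bF_diag (hn : 0 < n) (B : Matrix (Fin n) (Fin n) ℂ)
    (hskew : ∀ i j, B j i = -B i j) (i : ℕ) :
    bF hn B i i = 0 := by
  have := hskew ⟨i % n, Nat.mod_lt _ hn⟩ ⟨i % n, Nat.mod_lt _ hn⟩
  unfold bF
  linear_combination (1/2 : ℂ) * this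

lemma bF_succ (hn : 3 ≤ n) (B : Matrix (Fin n) (Fin n) ℂ)
    (hone : ∀ i : Fin n, B i ⟨(i.val + 1) % n, Nat.mod_lt _ (pos3 hn)⟩ = 1)
    (i : ℕ) : bF (pos3 hn) B i (i+1) = 1 := by
  have h := hone ⟨i % n, Nat.mod_lt _ (pos3 hn)⟩
  unfold bF
  convert h using 2
  simp [Nat.mod_add_mod]

lemma bF_succ' (hn : 3 ≤ n) (B : Matrix (Fin n) (Fin n) ℂ)
    (hskew : ∀ i j, B j i = -B i j)
    (hone : ∀ i : Fin n, B i ⟨(i.val + 1) % n, Nat.mod_lt _ (pos3 hn)⟩ = 1)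
    (i : ℕ) : bF (pos3 hn) B (i+1) i = -1 := by
  rw [bF_skew _ _ hskew, bF_succ hn B hone]

lemma ne_shift (hn : 0 < n) {i s : ℕ} (h1 : 1 ≤ s) (h2 : s < n) :
    i % n ≠ (i + s) % n := by
  intro h
  have : (i : ℕ) ≡ i + s [MOD n] := h
  have hd : n ∣ i + s - i := (Nat.modEq_iff_dvd' (by omega)).mp this
  rw [Nat.add_sub_cancel_left] at hd
  have := Nat.le_of_dvd (by omega) hd
  omega

/-- Column increment: for `2 ≤ t ≤ n-1`, `bF (i+t) i - bF (i+t-1) i` is a natural number. -/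
lemma bF_step (hn : 3 ≤ n) (B : Matrix (Fin n) (Fin n) ℂ)
    (hskew : ∀ i j, B j i = -B i j)
    (hsm : ∀ i : Fin n,
      IsSmoothable B i ⟨(i.val + 1) % n, Nat.mod_lt _ (pos3 hn)⟩)
    (hone : ∀ i : Fin n, B i ⟨(i.val + 1) % n, Nat.mod_lt _ (pos3 hn)⟩ = 1)
    (i t : ℕ) (h1 : 2 ≤ t) (h2 : t ≤ n - 1) :
    ∃ m : ℕ, bF (pos3 hn) B (i+t) i = bF (pos3 hn) B (i+t-1) i + m := by
  have hn0 : 0 < n := pos3 hn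
  set x : Fin n := ⟨(i+t-1) % n, Nat.mod_lt _ hn0⟩ with hx
  have hsm' := (hsm x).2 ⟨i % n, Nat.mod_lt _ hn0⟩
  have hne1 : (⟨i % n, Nat.mod_lt _ hn0⟩ : Fin n) ≠ x := by
    simp only [hx, ne_eq, Fin.mk.injEq]
    have : i + t - 1 = i + (t-1) := by omega
    rw [this]
    exact ne_shift hn0 (by omega) (by omega)
  have hy : ((x.val + 1) % n) = (i+t) % n := by
    simp only [hx, Nat.mod_add_mod]
    congr 1; omega
  have hne2 : (⟨i % n, Nat.mod_lt _ hn0⟩ : Fin n) ≠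
      ⟨(x.val + 1) % n, Nat.mod_lt _ (by omega)⟩ := by
    simp only [ne_eq, Fin.mk.injEq, hy]
    exact ne_shift hn0 (by omega) (by omega)
  obtain ⟨m, hm⟩ := hsm' hne1 hne2
  refine ⟨m, ?_⟩
  have hBxy : B x ⟨(x.val + 1) % n, Nat.mod_lt _ (by omega)⟩ = 1 := hone x
  rw [hBxy, div_one] at hm
  have e1 : B ⟨(x.val + 1) % n, Nat.mod_lt _ (by omega)⟩ ⟨i % n, Nat.mod_lt _ hn0⟩
      = bF hn0 B (i+t) i := by
    unfold bF; congr 1; exact Fin.ext (by simpa using hy)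
  have e2 : B ⟨i % n, Nat.mod_lt _ hn0⟩ x = -bF hn0 B (i+t-1) i := by
    rw [show B ⟨i % n, Nat.mod_lt _ hn0⟩ x = -B x ⟨i % n, Nat.mod_lt _ hn0⟩ from hskew _ _]
    rfl
  rw [e1, e2] at hm
  linear_combination hm

/-- Monotone accumulation along a column. -/
lemma bF_mono (hn : 3 ≤ n) (B : Matrix (Fin n) (Fin n) ℂ)
    (hskew : ∀ i j, B j i = -B i j)
    (hsm : ∀ i : Fin n,
      IsSmoothable B i ⟨(i.val + 1) % n, Nat.mod_lt _ (pos3 hn)⟩)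
    (hone : ∀ i : Fin n, B i ⟨(i.val + 1) % n, Nat.mod_lt _ (pos3 hn)⟩ = 1)
    (i t s : ℕ) (h1 : 1 ≤ t) (hts : t ≤ s) (h2 : s ≤ n - 1) :
    ∃ m : ℕ, bF (pos3 hn) B (i+s) i = bF (pos3 hn) B (i+t) i + m := by
  induction s, hts using Nat.le_induction with
  | base => exact ⟨0, by simp⟩
  | succ s hs ih =>
    obtain ⟨m, hm⟩ := ih (by omega)
    obtain ⟨m', hm'⟩ := bF_step hn B hskew hsm hone i (s+1) (by omega) h2
    refine ⟨m + m', ?_⟩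
    have : i + (s+1) - 1 = i + s := by omega
    rw [this] at hm'
    rw [hm', hm]
    push_cast
    ring

/-- Values along a column: `bF (i+t) i = -1 + a` with `a ≤ 2`. -/
lemma bF_val (hn : 3 ≤ n) (B : Matrix (Fin n) (Fin n) ℂ)
    (hskew : ∀ i j, B j i = -B i j)
    (hsm : ∀ i : Fin n,
      IsSmoothable B i ⟨(i.val + 1) % n, Nat.mod_lt _ (pos3 hn)⟩)
    (hone : ∀ i : Fin n, B i ⟨(i.val + 1) % n, Nat.mod_lt _ (pos3 hn)⟩ = 1)
    (i t : ℕ) (h1 : 1 ≤ t) (h2 : t ≤ n - 1) :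
    ∃ a : ℕ, a ≤ 2 ∧ bF (pos3 hn) B (i+t) i = -1 + a := by
  have hn0 : 0 < n := pos3 hn
  obtain ⟨a, ha⟩ := bF_mono hn B hskew hsm hone i 1 t le_rfl h1 h2
  obtain ⟨c, hc⟩ := bF_mono hn B hskew hsm hone i t (n-1) h1 h2 le_rfl
  rw [show i+1 = (i+1) from rfl] at ha
  rw [bF_succ' hn B hskew hone i] at ha
  have hend : bF hn0 B (i+(n-1)) i = 1 := by
    have h := bF_succ hn B hone (i+(n-1))
    have : bF hn0 B (i+(n-1)) (i+(n-1)+1) = bF hn0 B (i+(n-1)) i := by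
      apply bF_congr
      · rfl
      · have : i + (n-1) + 1 = i + n := by omega
        rw [this, Nat.add_mod_right]
    rw [this] at h
    exact h
  rw [hend] at hc
  refine ⟨a, ?_, ha⟩
  have h2' : (a : ℂ) + c = 2 := by rw [ha] at hc; linear_combination -hc
  have : ((a + c : ℕ) : ℂ) = ((2 : ℕ) : ℂ) := by push_cast; exact h2'
  have := Nat.cast_inj.mp this
  omega

lemma nat_add_cast_zero {m k : ℕ} (h : (m : ℂ) + k = 0) : m = 0 ∧ k = 0 := by
  have : ((m + k : ℕ) : ℂ) = ((0 : ℕ) : ℂ) := by push_cast; linear_combination h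
  have := Nat.cast_inj.mp this
  omega

/-- Row values are in {1, 0, -1}. -/
lemma row_val (hn : 3 ≤ n) (B : Matrix (Fin n) (Fin n) ℂ)
    (hskew : ∀ i j, B j i = -B i j)
    (hsm : ∀ i : Fin n,
      IsSmoothable B i ⟨(i.val + 1) % n, Nat.mod_lt _ (pos3 hn)⟩)
    (hone : ∀ i : Fin n, B i ⟨(i.val + 1) % n, Nat.mod_lt _ (pos3 hn)⟩ = 1)
    (i t : ℕ) (h1 : 1 ≤ t) (h2 : t ≤ n - 1) :
    bF (pos3 hn) B i (i+t) = 1 ∨ bF (pos3 hn) B i (i+t) = 0 ∨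
      bF (pos3 hn) B i (i+t) = -1 := by
  have hn0 : 0 < n := pos3 hn
  obtain ⟨a, ha2, ha⟩ := bF_val hn B hskew hsm hone i t h1 h2
  have hs : bF hn0 B i (i+t) = -bF hn0 B (i+t) i := by
    rw [bF_skew hn0 B hskew]
  rw [hs, ha]
  interval_cases a
  · left; push_cast; ring
  · right; left; push_cast; ring
  · right; right; push_cast; ring

/-- Row monotone: value 1 propagates downward. -/
lemma row_down (hn : 3 ≤ n) (B : Matrix (Fin n) (Fin n) ℂ)
    (hskew : ∀ i j, B j i = -B i j)
    (hsm : ∀ i : Fin n,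
      IsSmoothable B i ⟨(i.val + 1) % n, Nat.mod_lt _ (pos3 hn)⟩)
    (hone : ∀ i : Fin n, B i ⟨(i.val + 1) % n, Nat.mod_lt _ (pos3 hn)⟩ = 1)
    (i t s : ℕ) (h1 : 1 ≤ t) (hts : t ≤ s) (h2 : s ≤ n - 1)
    (hv : bF (pos3 hn) B i (i+s) = 1) : bF (pos3 hn) B i (i+t) = 1 := by
  have hn0 : 0 < n := pos3 hn
  obtain ⟨m, hm⟩ := bF_mono hn B hskew hsm hone i t s h1 hts h2
  have s1 := bF_skew hn0 B hskew i (i+t)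
  have s2 := bF_skew hn0 B hskew i (i+s)
  have e : bF hn0 B i (i+t) = bF hn0 B i (i+s) + m := by
    linear_combination hm + s1 - s2
  rw [hv] at e
  rcases row_val hn B hskew hsm hone i t h1 (by omega) with h | h | h
  · exact h
  · rw [h] at e
    obtain ⟨h1', h2'⟩ := nat_add_cast_zero (m := 1) (k := m) (by push_cast; linear_combination -e)
    omega
  · rw [h] at e
    have : ((2 : ℕ) : ℂ) + m = 0 := by push_cast; linear_combination -e
    obtain ⟨h1', h2'⟩ := nat_add_cast_zero this
    omega

/-- Row monotone: value -1 propagates upward. -/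
lemma row_up (hn : 3 ≤ n) (B : Matrix (Fin n) (Fin n) ℂ)
    (hskew : ∀ i j, B j i = -B i j)
    (hsm : ∀ i : Fin n,
      IsSmoothable B i ⟨(i.val + 1) % n, Nat.mod_lt _ (pos3 hn)⟩)
    (hone : ∀ i : Fin n, B i ⟨(i.val + 1) % n, Nat.mod_lt _ (pos3 hn)⟩ = 1)
    (i t s : ℕ) (h1 : 1 ≤ t) (hts : t ≤ s) (h2 : s ≤ n - 1)
    (hv : bF (pos3 hn) B i (i+t) = -1) : bF (pos3 hn) B i (i+s) = -1 := by
  have hn0 : 0 < n := pos3 hn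
  obtain ⟨m, hm⟩ := bF_mono hn B hskew hsm hone i t s h1 hts h2
  have s1 := bF_skew hn0 B hskew i (i+t)
  have s2 := bF_skew hn0 B hskew i (i+s)
  have e : bF hn0 B i (i+t) = bF hn0 B i (i+s) + m := by
    linear_combination hm + s1 - s2
  rw [hv] at e
  rcases row_val hn B hskew hsm hone i s (by omega) h2 with h | h | h
  · rw [h] at e
    have : ((2 : ℕ) : ℂ) + m = 0 := by push_cast; linear_combination -e
    obtain ⟨h1', h2'⟩ := nat_add_cast_zero this
    omega
  · rw [h] at e
    obtain ⟨h1', h2'⟩ := nat_add_cast_zero (m := 1) (k := m) (by push_cast; linear_combination -e)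
    omega
  · exact h

open Classical in
noncomputable def lF (hn : 0 < n) (B : Matrix (Fin n) (Fin n) ℂ) (i : ℕ) : ℕ :=
  ((Finset.Ico 1 n).filter fun t => bF hn B i (i+t) = 1).card

open Classical in
noncomputable def lF' (hn : 0 < n) (B : Matrix (Fin n) (Fin n) ℂ) (i : ℕ) : ℕ :=
  ((Finset.Ico 1 n).filter fun t => bF hn B i (i+t) = -1).card

open Classical in
lemma R1 (hn : 3 ≤ n) (B : Matrix (Fin n) (Fin n) ℂ)
    (hskew : ∀ i j, B j i = -B i j)
    (hsm : ∀ i : Fin n,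
      IsSmoothable B i ⟨(i.val + 1) % n, Nat.mod_lt _ (pos3 hn)⟩)
    (hone : ∀ i : Fin n, B i ⟨(i.val + 1) % n, Nat.mod_lt _ (pos3 hn)⟩ = 1)
    (i t : ℕ) (h1 : 1 ≤ t) (h2 : t ≤ n - 1) :
    bF (pos3 hn) B i (i+t) = 1 ↔ t ≤ lF (pos3 hn) B i := by
  have hn0 : 0 < n := pos3 hn
  constructor
  · intro hv
    have hsub : Finset.Icc 1 t ⊆ (Finset.Ico 1 n).filter fun s => bF hn0 B i (i+s) = 1 := by
      intro s hs
      simp only [Finset.mem_Icc] at hs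
      simp only [Finset.mem_filter, Finset.mem_Ico]
      exact ⟨⟨hs.1, by omega⟩, row_down hn B hskew hsm hone i s t hs.1 hs.2 h2 hv⟩
    have := Finset.card_le_card hsub
    simpa [lF, Nat.card_Icc] using this
  · intro hle
    by_contra hne
    have hsub : ((Finset.Ico 1 n).filter fun s => bF hn0 B i (i+s) = 1) ⊆ Finset.Ico 1 t := by
      intro s hs
      simp only [Finset.mem_filter, Finset.mem_Ico] at hs
      simp only [Finset.mem_Ico]
      refine ⟨hs.1.1, ?_⟩
      by_contra hst
      exact hne (row_down hn B hskew hsm hone i t s h1 (by omega) (by omega) hs.2)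
    have := Finset.card_le_card hsub
    simp only [Nat.card_Ico] at this
    have : lF hn0 B i ≤ t - 1 := by simpa [lF] using this
    omega

open Classical in
lemma R2 (hn : 3 ≤ n) (B : Matrix (Fin n) (Fin n) ℂ)
    (hskew : ∀ i j, B j i = -B i j)
    (hsm : ∀ i : Fin n,
      IsSmoothable B i ⟨(i.val + 1) % n, Nat.mod_lt _ (pos3 hn)⟩)
    (hone : ∀ i : Fin n, B i ⟨(i.val + 1) % n, Nat.mod_lt _ (pos3 hn)⟩ = 1)
    (i t : ℕ) (h1 : 1 ≤ t) (h2 : t ≤ n - 1) :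
    bF (pos3 hn) B i (i+t) = -1 ↔ n - lF' (pos3 hn) B i ≤ t := by
  have hn0 : 0 < n := pos3 hn
  have hcb : lF' hn0 B i ≤ n - 1 := by
    have : ((Finset.Ico 1 n).filter fun s => bF hn0 B i (i+s) = -1) ⊆ Finset.Ico 1 n :=
      Finset.filter_subset _ _
    have := Finset.card_le_card this
    simpa [lF', Nat.card_Ico] using this
  constructor
  · intro hv
    have hsub : Finset.Icc t (n-1) ⊆ (Finset.Ico 1 n).filter fun s => bF hn0 B i (i+s) = -1 := by
      intro s hs
      simp only [Finset.mem_Icc] at hs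
      simp only [Finset.mem_filter, Finset.mem_Ico]
      exact ⟨⟨by omega, by omega⟩, row_up hn B hskew hsm hone i t s h1 hs.1 hs.2 hv⟩
    have := Finset.card_le_card hsub
    simp only [Nat.card_Icc] at this
    have : n - t ≤ lF' hn0 B i := by
      have : n - 1 + 1 - t ≤ lF' hn0 B i := by simpa [lF'] using this
      omega
    omega
  · intro hle
    by_contra hne
    have hsub : ((Finset.Ico 1 n).filter fun s => bF hn0 B i (i+s) = -1) ⊆
        Finset.Ico (t+1) n := by
      intro s hs
      simp only [Finset.mem_filter, Finset.mem_Ico] at hs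
      simp only [Finset.mem_Ico]
      refine ⟨?_, hs.1.2⟩
      by_contra hst
      exact hne (row_up hn B hskew hsm hone i s t hs.1.1 (by omega) h2 hs.2)
    have := Finset.card_le_card hsub
    simp only [Nat.card_Ico] at this
    have : lF' hn0 B i ≤ n - (t+1) := by simpa [lF'] using this
    omega

open Classical in
lemma lF_eq_lF' (hn : 3 ≤ n) (B : Matrix (Fin n) (Fin n) ℂ)
    (hskew : ∀ i j, B j i = -B i j) (hrow : ∀ i, ∑ j, B i j = 0)
    (hsm : ∀ i : Fin n,
      IsSmoothable B i ⟨(i.val + 1) % n, Nat.mod_lt _ (pos3 hn)⟩)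
    (hone : ∀ i : Fin n, B i ⟨(i.val + 1) % n, Nat.mod_lt _ (pos3 hn)⟩ = 1)
    (i : ℕ) : lF (pos3 hn) B i = lF' (pos3 hn) B i := by
  have hn0 : 0 < n := pos3 hn
  haveI : NeZero n := ⟨by omega⟩
  set i₀ : Fin n := ⟨i % n, Nat.mod_lt _ hn0⟩ with hi₀
  -- step 1: the shifted row sum
  have hsum : ∑ t ∈ Finset.range n, bF hn0 B i (i+t) = 0 := by
    have h0 := hrow i₀
    have e1 : ∑ j : Fin n, B i₀ (i₀ + j) = ∑ j : Fin n, B i₀ j :=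
      Fintype.sum_equiv (Equiv.addLeft i₀) _ _ (fun x => by simp)
    have e2 : ∀ j : Fin n, B i₀ (i₀ + j) = bF hn0 B i (i + j.val) := by
      intro j
      have hval : i₀ + j = (⟨(i + j.val) % n, Nat.mod_lt _ hn0⟩ : Fin n) := by
        refine Fin.ext ?_
        rw [hi₀, Fin.add_def]
        exact Nat.mod_add_mod i n j.val
      rw [hval]
      rfl
    calc ∑ t ∈ Finset.range n, bF hn0 B i (i+t)
        = ∑ j : Fin n, bF hn0 B i (i + j.val) :=
          (Fin.sum_univ_eq_sum_range (fun t => bF hn0 B i (i+t)) n).symm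
      _ = ∑ j : Fin n, B i₀ (i₀ + j) := by simp_rw [e2]
      _ = 0 := by rw [e1, h0]
  -- step 2: peel off t = 0
  have hins : Finset.range n = insert 0 (Finset.Ico 1 n) := by
    ext t; simp [Finset.mem_range, Finset.mem_Ico]; omega
  rw [hins, Finset.sum_insert (by simp)] at hsum
  simp only [Nat.add_zero] at hsum
  rw [bF_diag hn0 B hskew, zero_add] at hsum
  -- step 3: split the sum by values
  set S := Finset.Ico 1 n with hS
  set f : ℕ → ℂ := fun t => bF hn0 B i (i+t) with hf
  have hsplit1 := Finset.sum_filter_add_sum_filter_not S (fun t => f t = 1) f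
  have hsplit2 := Finset.sum_filter_add_sum_filter_not (S.filter fun t => ¬ f t = 1)
    (fun t => f t = -1) f
  have hv1 : ∑ t ∈ S.filter (fun t => f t = 1), f t = (lF hn0 B i : ℂ) := by
    rw [Finset.sum_congr rfl (fun t ht => (Finset.mem_filter.mp ht).2)]
    simp [lF, hS, hf]
  have hfilter_eq : (S.filter fun t => ¬ f t = 1).filter (fun t => f t = -1)
      = S.filter (fun t => f t = -1) := by
    rw [Finset.filter_filter]
    apply Finset.filter_congr
    intro t _
    constructor
    · rintro ⟨_, h⟩; exact h
    · intro h; exact ⟨by rw [h]; norm_num, h⟩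
  have hv2 : ∑ t ∈ (S.filter fun t => ¬ f t = 1).filter (fun t => f t = -1), f t
      = -(lF' hn0 B i : ℂ) := by
    rw [hfilter_eq, Finset.sum_congr rfl (fun t ht => (Finset.mem_filter.mp ht).2)]
    simp [lF', hS, hf]
  have hv3 : ∑ t ∈ (S.filter fun t => ¬ f t = 1).filter (fun t => ¬ f t = -1), f t = 0 := by
    apply Finset.sum_eq_zero
    intro t ht
    simp only [Finset.mem_filter, hS, Finset.mem_Ico] at ht
    rcases row_val hn B hskew hsm hone i t ht.1.1.1 (by omega) with h | h | h
    · exact absurd h ht.1.2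
    · exact h
    · exact absurd h ht.2
  rw [hv2, hv3, add_zero] at hsplit2
  rw [hv1, ← hsplit2] at hsplit1
  have hsum' : ∑ x ∈ S, f x = 0 := hsum
  have : (lF hn0 B i : ℂ) = (lF' hn0 B i : ℂ) := by linear_combination hsplit1 + hsum'
  exact Nat.cast_inj.mp this

lemma lF_card_le (hn0 : 0 < n) (B : Matrix (Fin n) (Fin n) ℂ) (i : ℕ) :
    lF hn0 B i ≤ n - 1 := by
  classical
  have h := Finset.card_le_card (Finset.filter_subset
    (fun t => bF hn0 B i (i+t) = 1) (Finset.Ico 1 n))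
  simpa [lF, Nat.card_Ico] using h

lemma lF_pos (hn : 3 ≤ n) (B : Matrix (Fin n) (Fin n) ℂ)
    (hskew : ∀ i j, B j i = -B i j)
    (hsm : ∀ i : Fin n,
      IsSmoothable B i ⟨(i.val + 1) % n, Nat.mod_lt _ (pos3 hn)⟩)
    (hone : ∀ i : Fin n, B i ⟨(i.val + 1) % n, Nat.mod_lt _ (pos3 hn)⟩ = 1)
    (i : ℕ) : 1 ≤ lF (pos3 hn) B i :=
  (R1 hn B hskew hsm hone i 1 le_rfl (by omega)).mp (bF_succ hn B hone i)

lemma lF_half (hn : 3 ≤ n) (B : Matrix (Fin n) (Fin n) ℂ)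
    (hskew : ∀ i j, B j i = -B i j) (hrow : ∀ i, ∑ j, B i j = 0)
    (hsm : ∀ i : Fin n,
      IsSmoothable B i ⟨(i.val + 1) % n, Nat.mod_lt _ (pos3 hn)⟩)
    (hone : ∀ i : Fin n, B i ⟨(i.val + 1) % n, Nat.mod_lt _ (pos3 hn)⟩ = 1)
    (i : ℕ) : 2 * lF (pos3 hn) B i < n := by
  have hn0 : 0 < n := pos3 hn
  by_contra hc
  set l := lF hn0 B i with hl
  have hub : l ≤ n - 1 := lF_card_le hn0 B i
  have hpos : 1 ≤ l := lF_pos hn B hskew hsm hone i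
  have h1 : bF hn0 B i (i+l) = 1 :=
    (R1 hn B hskew hsm hone i l hpos hub).mpr le_rfl
  have h2 : bF hn0 B i (i+l) = -1 := by
    refine (R2 hn B hskew hsm hone i l hpos hub).mpr ?_
    rw [← lF_eq_lF' hn B hskew hrow hsm hone i]
    omega
  rw [h1] at h2
  norm_num at h2

lemma lF_mod (hn0 : 0 < n) (B : Matrix (Fin n) (Fin n) ℂ) (i : ℕ) :
    lF hn0 B i = lF hn0 B (i % n) := by
  classical
  unfold lF
  congr 1
  apply Finset.filter_congr
  intro t _
  rw [bF_congr hn0 B (i := i) (j := i + t) (i' := i % n) (j' := i % n + t)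
    (Nat.mod_mod_of_dvd i (dvd_refl n)).symm
    (Nat.mod_add_mod i n t).symm]

/-- Master row formula. -/
lemma master (hn : 3 ≤ n) (B : Matrix (Fin n) (Fin n) ℂ)
    (hskew : ∀ i j, B j i = -B i j) (hrow : ∀ i, ∑ j, B i j = 0)
    (hsm : ∀ i : Fin n,
      IsSmoothable B i ⟨(i.val + 1) % n, Nat.mod_lt _ (pos3 hn)⟩)
    (hone : ∀ i : Fin n, B i ⟨(i.val + 1) % n, Nat.mod_lt _ (pos3 hn)⟩ = 1)
    (i j : ℕ) (hi : i < n) (hj : j < n) :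
    B ⟨i, hi⟩ ⟨j, hj⟩ = rVec n (lF (pos3 hn) B i) ((j + n - i) % n) := by
  have hn0 : 0 < n := pos3 hn
  set t := (j + n - i) % n with ht
  set l := lF hn0 B i with hl
  have htn : t < n := Nat.mod_lt _ hn0
  have hBb : B ⟨i, hi⟩ ⟨j, hj⟩ = bF hn0 B i (i + t) := by
    unfold bF
    congr 1
    · exact Fin.ext (by simp [Nat.mod_eq_of_lt hi])
    · refine Fin.ext ?_
      show j = (i + t) % n
      rw [ht, Nat.add_mod_mod]
      have e : i + (j + n - i) = j + n := by omega
      rw [e, Nat.add_mod_right, Nat.mod_eq_of_lt hj]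
  have hub : l ≤ n - 1 := lF_card_le hn0 B i
  have hhalf : 2 * l < n := lF_half hn B hskew hrow hsm hone i
  rcases Nat.eq_zero_or_pos t with ht0 | htpos
  · -- t = 0 : diagonal
    have : j = i := by
      have hd : n ∣ j + n - i := Nat.dvd_of_mod_eq_zero (by rw [← ht, ht0])
      rcases hd with ⟨c, hc⟩
      have hc2 : c < 2 := by
        by_contra h
        have : n * 2 ≤ n * c := Nat.mul_le_mul_left n (by omega)
        omega
      interval_cases c <;> omega
    rw [ht0, hBb, ht0]
    simp only [Nat.add_zero]
    rw [bF_diag hn0 B hskew]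
    simp [rVec]
  · by_cases hle : t ≤ l
    · rw [hBb, (R1 hn B hskew hsm hone i t htpos (by omega)).mpr hle]
      rw [rVec, if_neg (by omega), if_pos hle]
    · by_cases hge : n - l ≤ t
      · rw [hBb, (R2 hn B hskew hsm hone i t htpos (by omega)).mpr
          (by rw [← lF_eq_lF' hn B hskew hrow hsm hone i, ← hl]; omega)]
        rw [rVec, if_neg (by omega), if_neg hle, if_pos hge]
      · have h0 : bF hn0 B i (i+t) = 0 := by
          rcases row_val hn B hskew hsm hone i t htpos (by omega) with h | h | h
          · exact absurd ((R1 hn B hskew hsm hone i t htpos (by omega)).mp h) hle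
          · exact h
          · have := (R2 hn B hskew hsm hone i t htpos (by omega)).mp h
            rw [← lF_eq_lF' hn B hskew hrow hsm hone i, ← hl] at this
            omega
        rw [hBb, h0, rVec, if_neg (by omega), if_neg hle, if_neg hge]

/-- Property P : skew-symmetry in terms of the row lengths. -/
lemma propP (hn : 3 ≤ n) (B : Matrix (Fin n) (Fin n) ℂ)
    (hskew : ∀ i j, B j i = -B i j) (hrow : ∀ i, ∑ j, B i j = 0)
    (hsm : ∀ i : Fin n,
      IsSmoothable B i ⟨(i.val + 1) % n, Nat.mod_lt _ (pos3 hn)⟩)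
    (hone : ∀ i : Fin n, B i ⟨(i.val + 1) % n, Nat.mod_lt _ (pos3 hn)⟩ = 1)
    (i t : ℕ) (h1 : 1 ≤ t) (h2 : t < n) :
    t ≤ lF (pos3 hn) B i ↔ t ≤ lF (pos3 hn) B (i + t) := by
  have hn0 : 0 < n := pos3 hn
  have e1 : (t ≤ lF hn0 B i) ↔ bF hn0 B i (i+t) = 1 :=
    (R1 hn B hskew hsm hone i t h1 (by omega)).symm
  have e2 : bF hn0 B i (i+t) = 1 ↔ bF hn0 B (i+t) i = -1 := by
    rw [bF_skew hn0 B hskew i (i+t)]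
    constructor
    · intro h; rw [h]
    · intro h; have := neg_eq_iff_eq_neg.mp h; rw [this]; norm_num
  have e3 : bF hn0 B (i+t) i = bF hn0 B (i+t) ((i+t) + (n-t)) := by
    apply bF_congr hn0 B rfl
    have e : i + t + (n - t) = i + n := by omega
    rw [e, Nat.add_mod_right]
  have e4 : bF hn0 B (i+t) ((i+t) + (n-t)) = -1 ↔ n - lF' hn0 B (i+t) ≤ n - t :=
    R2 hn B hskew hsm hone (i+t) (n-t) (by omega) (by omega)
  have hub : lF hn0 B (i+t) ≤ n - 1 := lF_card_le hn0 B (i+t)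
  rw [e1, e2, e3, e4, ← lF_eq_lF' hn B hskew hrow hsm hone (i+t)]
  omega



lemma NT2 (hn0 : 0 < n) {k : ℕ} (hk : 2 ≤ k) (x j : ℕ) :
    ∃ a b : ℕ, (x + (a * k + b * (k-1))) % n = j % n := by
  set m := k - 1 with hm'
  have hm : 1 ≤ m := by omega
  set D := (j % n + n - x % n) + n * (k * k) with hD
  set a := D % m with ha
  set q := D / m with hq
  have hdm : m * q + a = D := Nat.div_add_mod D m
  have hDge : k * m ≤ D := by
    have h1 : k * m ≤ k * k := Nat.mul_le_mul_left k (by omega)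
    have h2 : k * k ≤ n * (k * k) := Nat.le_mul_of_pos_left _ hn0
    omega
  have hqk : k ≤ q := (Nat.le_div_iff_mul_le (by omega)).mpr hDge
  have haq : a ≤ q := by
    have := Nat.mod_lt D (y := m) (by omega)
    omega
  refine ⟨a, q - a, ?_⟩
  have hrep : a * k + (q - a) * m = D := by
    have h1 : a * k = a * m + a := by rw [show k = m + 1 by omega, Nat.mul_succ]
    have h2 : (q - a) * m = q * m - a * m := Nat.sub_mul q a m
    have h3 : a * m ≤ q * m := Nat.mul_le_mul_right m haq
    have h4 : m * q = q * m := Nat.mul_comm m q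
    rw [h1, h2]
    omega
  rw [hrep]
  have hxD : x + D = j % n + n * (x / n + 1 + k * k) := by
    have h1 : n * (x / n) + x % n = x := Nat.div_add_mod x n
    have h2 : x % n < n := Nat.mod_lt _ hn0
    have h3 : j % n < n := Nat.mod_lt _ hn0
    have h4 : n * (x / n + 1 + k * k) = n * (x / n) + n + n * (k * k) := by ring
    omega
  rw [hxD, Nat.add_mul_mod_self_left, Nat.mod_mod_of_dvd j (dvd_refl n)]

lemma NT1 (hn0 : 0 < n) {k : ℕ} (hk : 0 < k) (i j : ℕ)
    (h : i % Nat.gcd n k = j % Nat.gcd n k) :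
    ∃ m : ℕ, (i + m * k) % n = j % n := by
  set d := Nat.gcd n k with hd
  set A := Nat.gcdA n k with hA
  set B := Nat.gcdB n k with hB
  have hbez : (d : ℤ) = n * A + k * B := Nat.gcd_eq_gcd_ab n k
  have hdvd : (d : ℤ) ∣ (j : ℤ) - i := by
    have hc : (i : ℤ) % d = (j : ℤ) % d := by
      have := congrArg (Nat.cast : ℕ → ℤ) h
      push_cast at this
      exact this
    exact Int.ModEq.dvd hc
  obtain ⟨w, hw⟩ := hdvd
  set M : ℤ := (B * w) % n with hM
  have hM0 : 0 ≤ M := Int.emod_nonneg _ (by exact_mod_cast hn0.ne')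
  set q := (B * w) / n with hq
  have hMdef : M = B * w - n * q := by rw [hM, hq, Int.emod_def]
  refine ⟨M.toNat, ?_⟩
  have hmz : (M.toNat : ℤ) = M := Int.toNat_of_nonneg hM0
  have hdvd2 : (n : ℤ) ∣ ((i : ℤ) + (M.toNat : ℤ) * k) - j := by
    refine ⟨-(A * w) - q * k, ?_⟩
    rw [hmz, hMdef]
    linear_combination -hw - w * hbez
  have hmod : ((i + M.toNat * k : ℕ) : ℤ) % n = ((j : ℕ) : ℤ) % n := by
    have hneg : (n : ℤ) ∣ (j : ℤ) - ((i : ℤ) + (M.toNat : ℤ) * k) := by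
      rw [show (j:ℤ) - ((i:ℤ) + (M.toNat:ℤ)*(k:ℤ)) =
        -(((i:ℤ) + (M.toNat:ℤ)*(k:ℤ)) - (j:ℤ)) by ring]
      exact dvd_neg.mpr hdvd2
    have hme : Int.ModEq n ((i:ℤ) + (M.toNat:ℤ)*(k:ℤ)) (j:ℤ) := Int.modEq_iff_dvd.mpr hneg
    push_cast
    exact hme
  have : (((i + M.toNat * k) % n : ℕ) : ℤ) = ((j % n : ℕ) : ℤ) := by push_cast; exact hmod
  exact_mod_cast this

lemma stepIter (l : ℕ → ℕ)
    (hP : ∀ i t, 1 ≤ t → t < n → (t ≤ l i ↔ t ≤ l (i + t)))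
    {t : ℕ} (h1 : 1 ≤ t) (h2 : t < n) (m i : ℕ) (hi : t ≤ l i) :
    t ≤ l (i + m * t) := by
  induction m with
  | zero => simpa using hi
  | succ m ih =>
    have : i + (m+1) * t = (i + m * t) + t := by ring
    rw [this]
    exact (hP (i + m * t) t h1 h2).mp ih

lemma lemA (hn0 : 0 < n) (l : ℕ → ℕ) {k i₀ : ℕ}
    (hub : ∀ i, l i ≤ k) (hik : l i₀ = k) (hkpos : 1 ≤ k) (hkn : 2 * k < n)
    (hmod : ∀ i, l i = l (i % n))
    (hP : ∀ i t, 1 ≤ t → t < n → (t ≤ l i ↔ t ≤ l (i + t)))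
    (j : ℕ) : k - 1 ≤ l j := by
  rcases Nat.lt_or_ge k 2 with hk | hk
  · omega
  · obtain ⟨a, b, hab⟩ := NT2 hn0 hk i₀ j
    have h1 : k ≤ l (i₀ + a * k) :=
      stepIter l hP hkpos (by omega) a i₀ (by omega)
    have h2 : k - 1 ≤ l (i₀ + a * k + b * (k-1)) :=
      stepIter l hP (t := k - 1) (by omega) (by omega) b (i₀ + a * k) (by omega)
    have e : i₀ + a * k + b * (k-1) = i₀ + (a * k + b * (k-1)) := by ring
    rw [e, hmod (i₀ + (a * k + b * (k-1))), hab, ← hmod j] at h2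
    exact h2

lemma periodic (hn0 : 0 < n) (l : ℕ → ℕ) {k i₀ : ℕ}
    (hub : ∀ i, l i ≤ k) (hik : l i₀ = k) (hkpos : 1 ≤ k) (hkn : 2 * k < n)
    (hmod : ∀ i, l i = l (i % n))
    (hP : ∀ i t, 1 ≤ t → t < n → (t ≤ l i ↔ t ≤ l (i + t)))
    (i j : ℕ) (hij : i % Nat.gcd n k = j % Nat.gcd n k) : l i = l j := by
  have key : ∀ x y : ℕ, x % Nat.gcd n k = y % Nat.gcd n k → k ≤ l x → k ≤ l y := by
    intro x y hxy hx
    obtain ⟨m, hm⟩ := NT1 hn0 hkpos x y hxy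
    have := stepIter l hP hkpos (by omega) m x hx
    rw [hmod (x + m * k), hm, ← hmod y] at this
    exact this
  have hA := lemA hn0 l hub hik hkpos hkn hmod hP
  by_cases hki : k ≤ l i
  · have := key i j hij hki
    have := hub i; have := hub j
    omega
  · have hkj : ¬ k ≤ l j := fun hkj => hki (key j i hij.symm hkj)
    have := hA i; have := hA j
    have := hub i; have := hub j
    omega

end SmAux

open SmAux

/-- **Case 1 of Theorem C.** If `B` is skew-symmetric with zero
row sums, every edge `{i, (i+1) mod n}` is smoothable for `B`, and
`b_{i,(i+1) mod n} = 1` for every `i`, then `B` is a simultaneous cyclic shift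
of some `C_{n,k,I}`. -/
theorem smoothable_cycle_with_unit_biresidues_is_CnkI {n : ℕ} (hn : 3 ≤ n)
    (B : Matrix (Fin n) (Fin n) ℂ)
    (hskew : ∀ i j, B j i = -B i j) (hrow : ∀ i, ∑ j, B i j = 0)
    (hsm : ∀ i : Fin n,
      IsSmoothable B i ⟨(i.val + 1) % n, Nat.mod_lt _ (by omega)⟩)
    (hone : ∀ i : Fin n, B i ⟨(i.val + 1) % n, Nat.mod_lt _ (by omega)⟩ = 1) :
    ∃ (k : ℕ) (I : ℕ → ℕ) (c : ℕ),
      1 ≤ k ∧ 2 * k < n ∧ (∀ s < Nat.gcd n k, I s ≤ 1) ∧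
      ∀ i j : Fin n, B i j =
        CnkI n k I ⟨(i.val + c) % n, Nat.mod_lt _ (by omega)⟩
          ⟨(j.val + c) % n, Nat.mod_lt _ (by omega)⟩ := by
  have hn0 : 0 < n := by omega
  have hne : (Finset.range n).Nonempty := ⟨0, Finset.mem_range.mpr (by omega)⟩
  obtain ⟨i₀, hi₀mem, hi₀⟩ := Finset.exists_mem_eq_sup (Finset.range n) hne (lF hn0 B)
  set k := (Finset.range n).sup (lF hn0 B) with hk
  have hmod : ∀ i, lF hn0 B i = lF hn0 B (i % n) := fun i => lF_mod hn0 B i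
  have hub : ∀ i, lF hn0 B i ≤ k := by
    intro i
    rw [hmod i]
    exact Finset.le_sup (Finset.mem_range.mpr (Nat.mod_lt _ hn0))
  have hkpos : 1 ≤ k := by
    have h1 : 1 ≤ lF hn0 B i₀ := lF_pos hn B hskew hsm hone i₀
    omega
  have hkn : 2 * k < n := by
    have h1 : 2 * lF hn0 B i₀ < n := lF_half hn B hskew hrow hsm hone i₀
    omega
  have hP : ∀ i t, 1 ≤ t → t < n →
      (t ≤ lF hn0 B i ↔ t ≤ lF hn0 B (i + t)) :=
    fun i t h1 h2 => propP hn B hskew hrow hsm hone i t h1 h2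
  have hA : ∀ j, k - 1 ≤ lF hn0 B j :=
    lemA hn0 (lF hn0 B) hub hi₀.symm hkpos hkn hmod hP
  have hper : ∀ i j, i % Nat.gcd n k = j % Nat.gcd n k → lF hn0 B i = lF hn0 B j :=
    periodic hn0 (lF hn0 B) hub hi₀.symm hkpos hkn hmod hP
  refine ⟨k, fun s => k - lF hn0 B s, 0, hkpos, hkn, ?_, ?_⟩
  · intro s _
    show k - lF hn0 B s ≤ 1
    have := hA s
    omega
  · intro i j
    have hmaster : B ⟨i.val, i.isLt⟩ ⟨j.val, j.isLt⟩ =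
        rVec n (lF hn0 B i.val) ((j.val + n - i.val) % n) :=
      master hn B hskew hrow hsm hone i.val j.val i.isLt j.isLt
    have e0i : (i.val + 0) % n = i.val := by rw [Nat.add_zero, Nat.mod_eq_of_lt i.isLt]
    have e0j : (j.val + 0) % n = j.val := by rw [Nat.add_zero, Nat.mod_eq_of_lt j.isLt]
    have hlper : lF hn0 B (i.val % Nat.gcd n k) = lF hn0 B i.val :=
      hper _ _ (Nat.mod_mod_of_dvd _ (dvd_refl _))
    have hcancel : k - (k - lF hn0 B (i.val % Nat.gcd n k)) = lF hn0 B i.val := by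
      have := hub (i.val % Nat.gcd n k)
      omega
    show B i j = rVec n (k - (k - lF hn0 B
        ((⟨(i.val + 0) % n, Nat.mod_lt _ (by omega)⟩ : Fin n).val % Nat.gcd n k)))
      (((⟨(j.val + 0) % n, Nat.mod_lt _ (by omega)⟩ : Fin n).val + n -
        (⟨(i.val + 0) % n, Nat.mod_lt _ (by omega)⟩ : Fin n).val) % n)
    simp only [e0i, e0j]
    rw [hcancel]
    simpa using hmaster
end

section
/- Let n ≥ 3 and 1 ≤ k < n/2. Then the rank of the matrix C_{n,k} over ℂ is equal to the number of integers j with 0 ≤ j ≤ n−1 such that neither jk nor j(k+1) is divisible by n. -/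
open BigOperators Matrix

/-- The matrix `C_{n,k}`, whose `i`-th row is `T^i(r(k))`;
equivalently `(C_{n,k})_{ij} = r(k)_{(j−i) mod n}`. -/
def Cnk (n k : ℕ) : Matrix (Fin n) (Fin n) ℂ :=
  Matrix.of fun i j => rVec n k ((j.val + n - i.val) % n)

/-- The "eigenvalue" sum at a point ζ. -/
noncomputable def evSum (n k : ℕ) (ζ : ℂ) : ℂ :=
  ∑ m ∈ Finset.range n, rVec n k m * ζ ^ m

lemma evSum_split (n k : ℕ) (hk1 : 1 ≤ k) (hk2 : 2 * k < n) (ζ : ℂ) :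
    evSum n k ζ
      = (∑ m ∈ Finset.Ico 1 (k+1), ζ ^ m) - ∑ m ∈ Finset.Ico (n-k) n, ζ ^ m := by
  have h1 : (1:ℕ) ≤ k + 1 := by omega
  have h2 : k + 1 ≤ n - k := by omega
  have h3 : n - k ≤ n := by omega
  have e1 := Finset.sum_Ico_consecutive (fun m => rVec n k m * ζ ^ m)
      (Nat.zero_le (n-k)) h3
  have e2 := Finset.sum_Ico_consecutive (fun m => rVec n k m * ζ ^ m)
      (Nat.zero_le (k+1)) h2
  have e3 := Finset.sum_Ico_consecutive (fun m => rVec n k m * ζ ^ m)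
      (Nat.zero_le 1) h1
  have pA : ∑ m ∈ Finset.Ico 0 1, rVec n k m * ζ ^ m = 0 := by
    simp [rVec]
  have pB : ∑ m ∈ Finset.Ico 1 (k+1), rVec n k m * ζ ^ m
      = ∑ m ∈ Finset.Ico 1 (k+1), ζ ^ m := by
    refine Finset.sum_congr rfl fun m hm => ?_
    rw [Finset.mem_Ico] at hm
    have hm0 : m ≠ 0 := by omega
    have hmk : m ≤ k := by omega
    simp [rVec, hm0, hmk]
  have pC : ∑ m ∈ Finset.Ico (k+1) (n-k), rVec n k m * ζ ^ m = 0 := by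
    refine Finset.sum_eq_zero fun m hm => ?_
    rw [Finset.mem_Ico] at hm
    have hm0 : m ≠ 0 := by omega
    have hmk : ¬ m ≤ k := by omega
    have hmn : ¬ n - k ≤ m := by omega
    simp [rVec, hm0, hmk, hmn]
  have pD : ∑ m ∈ Finset.Ico (n-k) n, rVec n k m * ζ ^ m
      = -∑ m ∈ Finset.Ico (n-k) n, ζ ^ m := by
    rw [← Finset.sum_neg_distrib]
    refine Finset.sum_congr rfl fun m hm => ?_
    rw [Finset.mem_Ico] at hm
    have hm0 : m ≠ 0 := by omega
    have hmk : ¬ m ≤ k := by omega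
    have hmn : n - k ≤ m := hm.1
    simp [rVec, hm0, hmk, hmn]
  rw [evSum, ← Nat.Ico_zero_eq_range, ← e1, ← e2, ← e3, pA, pB, pC, pD]
  ring

lemma evSum_mul (n k : ℕ) (hk1 : 1 ≤ k) (hk2 : 2 * k < n) (ζ : ℂ) (hζ : ζ ^ n = 1) :
    evSum n k ζ * ((ζ - 1) * ζ ^ k) = (ζ ^ k - 1) * (ζ ^ (k+1) - 1) := by
  have hkn : k ≤ n := by omega
  have h3 : n - k ≤ n := by omega
  have hA : (∑ m ∈ Finset.Ico 1 (k+1), ζ ^ m) * (ζ - 1) = ζ ^ (k+1) - ζ := by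
    rw [Finset.sum_Ico_eq_sub _ (by omega : 1 ≤ k + 1), sub_mul, geom_sum_mul, geom_sum_mul,
      pow_one]
    ring
  have hB : (∑ m ∈ Finset.Ico (n-k) n, ζ ^ m) * (ζ - 1) = 1 - ζ ^ (n-k) := by
    rw [Finset.sum_Ico_eq_sub _ h3, sub_mul, geom_sum_mul, geom_sum_mul, hζ]
    ring
  have hnk : ζ ^ (n-k) * ζ ^ k = 1 := by
    rw [← pow_add, Nat.sub_add_cancel hkn, hζ]
  have hsucc : ζ ^ (k+1) = ζ ^ k * ζ := pow_succ ζ k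
  calc evSum n k ζ * ((ζ - 1) * ζ ^ k)
      = ((∑ m ∈ Finset.Ico 1 (k+1), ζ ^ m) * (ζ - 1)
          - (∑ m ∈ Finset.Ico (n-k) n, ζ ^ m) * (ζ - 1)) * ζ ^ k := by
        rw [evSum_split n k hk1 hk2 ζ]; ring
    _ = (ζ ^ (k+1) - ζ - (1 - ζ ^ (n-k))) * ζ ^ k := by rw [hA, hB]
    _ = (ζ ^ k - 1) * (ζ ^ (k+1) - 1) := by
        rw [hsucc]
        linear_combination hnk

lemma evSum_eq_zero_iff (n k : ℕ) (hn : 3 ≤ n) (hk1 : 1 ≤ k) (hk2 : 2 * k < n)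
    (ζ : ℂ) (hζ : ζ ^ n = 1) :
    evSum n k ζ = 0 ↔ (ζ ^ k = 1 ∨ ζ ^ (k+1) = 1) := by
  by_cases h1 : ζ = 1
  · subst h1
    simp only [one_pow, true_or, iff_true]
    rw [evSum_split n k hk1 hk2 1]
    simp only [one_pow, Finset.sum_const, nsmul_eq_mul, mul_one, Nat.card_Ico]
    have : k + 1 - 1 = n - (n - k) := by omega
    rw [this, sub_self]
  · have hζ0 : ζ ≠ 0 := by
      intro h
      rw [h, zero_pow (by omega : n ≠ 0)] at hζ
      exact zero_ne_one hζ
    have hne : (ζ - 1) * ζ ^ k ≠ 0 :=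
      mul_ne_zero (sub_ne_zero.mpr h1) (pow_ne_zero _ hζ0)
    have hq := evSum_mul n k hk1 hk2 ζ hζ
    constructor
    · intro h
      rw [h, zero_mul] at hq
      rcases mul_eq_zero.mp hq.symm with h' | h'
      · exact Or.inl (by linear_combination h')
      · exact Or.inr (by linear_combination h')
    · intro h
      have hz : (ζ ^ k - 1) * (ζ ^ (k+1) - 1) = 0 := by
        rcases h with h | h
        · rw [h]; ring
        · rw [h]; ring
      rw [hz] at hq
      exact (mul_eq_zero.mp hq).resolve_right hne

/-- The rank of `C_{n,k}` over `ℂ` equals the number of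
`j ∈ {0,…,n−1}` such that neither `jk` nor `j(k+1)` is divisible by `n`. -/
theorem rank_Cnk (n k : ℕ) (hn : 3 ≤ n) (hk1 : 1 ≤ k) (hk2 : 2 * k < n) :
    (Cnk n k).rank =
      ((Finset.range n).filter (fun j => ¬ n ∣ j * k ∧ ¬ n ∣ j * (k + 1))).card := by
  classical
  have hn0 : n ≠ 0 := by omega
  haveI : NeZero n := ⟨hn0⟩
  set ω : ℂ := Complex.exp (2 * Real.pi * Complex.I / n) with hωdef
  have hω : IsPrimitiveRoot ω n := Complex.isPrimitiveRoot_exp n hn0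
  have hωn : ω ^ n = 1 := hω.pow_eq_one
  have hpowmod : ∀ x : ℕ, ω ^ (x % n) = ω ^ x := by
    intro x
    conv_rhs => rw [← Nat.div_add_mod x n]
    rw [pow_add, pow_mul, hωn, one_pow, one_mul]
  set F : Matrix (Fin n) (Fin n) ℂ := Matrix.of (fun i j => ω ^ (i.val * j.val)) with hFdef
  set ev : Fin n → ℂ := fun j => evSum n k (ω ^ j.val) with hevdef
  -- the key diagonalization equation
  have key : Cnk n k * F = F * Matrix.diagonal ev := by
    ext i j
    rw [Matrix.mul_apply, Matrix.mul_diagonal]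
    have harg : ∀ s : Fin n, ((s + i).val + n - i.val) % n = s.val := by
      intro s
      have hi : i.val < n := i.isLt
      have hs : s.val < n := s.isLt
      rw [Fin.val_add]
      have h1 : (s.val + i.val) % n + n - i.val = (s.val + i.val) % n + (n - i.val) := by omega
      rw [h1, Nat.mod_add_mod]
      have h2 : s.val + i.val + (n - i.val) = s.val + n := by omega
      rw [h2, Nat.add_mod_right, Nat.mod_eq_of_lt hs]
    have hCe : ∀ s : Fin n, Cnk n k i (s + i) = rVec n k s.val := by
      intro s
      show rVec n k (((s + i).val + n - i.val) % n) = rVec n k s.val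
      rw [harg]
    have hFe : ∀ s : Fin n, F (s + i) j = ω ^ (s.val * j.val) * ω ^ (i.val * j.val) := by
      intro s
      show ω ^ ((s + i).val * j.val) = _
      rw [Fin.val_add, pow_mul, hpowmod, ← pow_mul, add_mul, pow_add]
    calc ∑ t : Fin n, Cnk n k i t * F t j
        = ∑ s : Fin n, Cnk n k i (s + i) * F (s + i) j := by
          rw [← Equiv.sum_comp (Equiv.addRight i) (fun t => Cnk n k i t * F t j)]
          rfl
      _ = ∑ s : Fin n, rVec n k s.val * (ω ^ (s.val * j.val) * ω ^ (i.val * j.val)) := by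
          refine Finset.sum_congr rfl fun s _ => ?_
          rw [hCe s, hFe s]
      _ = (∑ s : Fin n, rVec n k s.val * ω ^ (s.val * j.val)) * ω ^ (i.val * j.val) := by
          rw [Finset.sum_mul]
          exact Finset.sum_congr rfl fun s _ => by ring
      _ = F i j * ev j := by
          rw [mul_comm]
          congr 1
          show _ = evSum n k (ω ^ j.val)
          rw [evSum, ← Fin.sum_univ_eq_sum_range]
          refine Finset.sum_congr rfl fun s _ => ?_
          rw [← pow_mul, mul_comm j.val s.val]
  -- F is invertible
  have hFvdm : F = Matrix.vandermonde (fun i : Fin n => ω ^ (i.val)) := by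
    ext i j
    exact pow_mul ω i.val j.val
  have hinj : Function.Injective (fun i : Fin n => ω ^ (i.val)) := by
    intro a b h
    exact Fin.ext (hω.pow_inj a.isLt b.isLt h)
  have hFdet : IsUnit F.det := by
    rw [hFvdm]
    exact isUnit_iff_ne_zero.mpr (Matrix.det_vandermonde_ne_zero_iff.mpr hinj)
  have hrank : (Cnk n k).rank = (Matrix.diagonal ev).rank := by
    rw [← Matrix.rank_mul_eq_left_of_isUnit_det F (Cnk n k) hFdet, key,
      Matrix.rank_mul_eq_right_of_isUnit_det F _ hFdet]
  rw [hrank, Matrix.rank_diagonal]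
  -- characterize the nonzero eigenvalues
  have hev : ∀ j : Fin n, ev j ≠ 0 ↔ (¬ n ∣ j.val * k ∧ ¬ n ∣ j.val * (k + 1)) := by
    intro j
    have hζn : (ω ^ j.val) ^ n = 1 := by
      rw [← pow_mul, mul_comm, pow_mul, hωn, one_pow]
    rw [hevdef]
    show ¬ (evSum n k (ω ^ j.val) = 0) ↔ _
    rw [evSum_eq_zero_iff n k hn hk1 hk2 _ hζn, ← pow_mul, ← pow_mul,
      hω.pow_eq_one_iff_dvd, hω.pow_eq_one_iff_dvd]
    tauto
  rw [Fintype.card_subtype]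
  refine Finset.card_bij (fun j _ => j.val) ?_ ?_ ?_
  · intro j hj
    rw [Finset.mem_filter] at hj ⊢
    exact ⟨Finset.mem_range.mpr j.isLt, (hev j).mp hj.2⟩
  · intro a _ b _ h
    exact Fin.ext h
  · intro m hm
    rw [Finset.mem_filter, Finset.mem_range] at hm
    exact ⟨⟨m, hm.1⟩, Finset.mem_filter.mpr ⟨Finset.mem_univ _, (hev _).mpr hm.2⟩, rfl⟩
end

section
/- Let n ≥ 3 and 1 ≤ k < n/2. Then the rank of C_{n,k} over ℂ equals n − 1 if and only if gcd(n,k) = 1 and gcd(n,k+1) = 1. -/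
open BigOperators Matrix

lemma mod_helper (n a b : ℕ) (ha : a < n) (hb : b < n) :
    ((a + b) % n + n - b) % n = a := by
  rcases Nat.lt_or_ge (a + b) n with h | h
  · rw [Nat.mod_eq_of_lt h]
    have h2 : a + b + n - b = a + n := by omega
    rw [h2, Nat.add_mod_right, Nat.mod_eq_of_lt ha]
  · have h2 : (a + b) % n = a + b - n := by
      rw [Nat.mod_eq_sub_mod h, Nat.mod_eq_of_lt (by omega)]
    rw [h2]
    have h3 : a + b - n + n - b = a := by omega
    rw [h3, Nat.mod_eq_of_lt ha]

lemma pow_val_mod {n : ℕ} {ω : ℂ} (hω : ω ^ n = 1) (a : ℕ) :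
    ω ^ (a % n) = ω ^ a := by
  conv_rhs => rw [← Nat.div_add_mod a n]
  rw [pow_add, pow_mul, hω, one_pow, one_mul]

lemma sum_rVec_eq (n k : ℕ) (hk2 : 2 * k < n) (z : ℂ) :
    ∑ t : Fin n, rVec n k t.val * z ^ t.val
      = (∑ t ∈ Finset.Ico 1 (k + 1), z ^ t) - ∑ t ∈ Finset.Ico (n - k) n, z ^ t := by
  rw [Fin.sum_univ_eq_sum_range (fun t => rVec n k t * z ^ t) n]
  have h1 : ∀ t ∈ Finset.range n, rVec n k t * z ^ t =
      (if t ∈ Finset.Ico 1 (k + 1) then z ^ t else 0)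
        - (if t ∈ Finset.Ico (n - k) n then z ^ t else 0) := by
    intro t ht
    simp only [Finset.mem_range] at ht
    simp only [Finset.mem_Ico, rVec]
    split_ifs with h1 h2 h3 <;> first | ring1 | (exfalso; omega)
  have h2 : Finset.range n ∩ Finset.Ico 1 (k + 1) = Finset.Ico 1 (k + 1) := by
    apply Finset.inter_eq_right.mpr
    intro x hx
    simp only [Finset.mem_Ico] at hx
    simp only [Finset.mem_range]
    omega
  have h3 : Finset.range n ∩ Finset.Ico (n - k) n = Finset.Ico (n - k) n := by
    apply Finset.inter_eq_right.mpr
    intro x hx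
    simp only [Finset.mem_Ico] at hx
    simp only [Finset.mem_range]
    omega
  rw [Finset.sum_congr rfl h1, Finset.sum_sub_distrib, Finset.sum_ite_mem, Finset.sum_ite_mem, h2, h3]

lemma key_identity (n k : ℕ) (hk2 : 2 * k < n) (z : ℂ) (hz : z ^ n = 1) :
    (z - 1) * z ^ k * ∑ t : Fin n, rVec n k t.val * z ^ t.val
      = (z ^ k - 1) * (z ^ (k + 1) - 1) := by
  rw [sum_rVec_eq n k hk2 z]
  have hA : ∑ t ∈ Finset.Ico 1 (k + 1), z ^ t = z * ∑ i ∈ Finset.range k, z ^ i := by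
    rw [Finset.sum_Ico_eq_sum_range, Finset.mul_sum]
    simp only [Nat.add_sub_cancel]
    exact Finset.sum_congr rfl fun i _ => by rw [pow_add, pow_one]
  have hB : z ^ k * ∑ t ∈ Finset.Ico (n - k) n, z ^ t = ∑ i ∈ Finset.range k, z ^ i := by
    rw [Finset.sum_Ico_eq_sum_range, Finset.mul_sum]
    have hnk : n - (n - k) = k := by omega
    rw [hnk]
    refine Finset.sum_congr rfl fun i _ => ?_
    have h3 : k + (n - k + i) = n + i := by omega
    rw [← pow_add, h3, pow_add, hz, one_mul]
  have hG := geom_sum_mul z k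
  linear_combination ((z - 1) * z ^ k) * hA - (z - 1) * hB + (z ^ (k + 1) - 1) * hG

lemma dvd_forall_iff_gcd (n m : ℕ) (hn : 3 ≤ n) :
    (∀ j : ℕ, 0 < j → j < n → ¬ n ∣ j * m) ↔ Nat.gcd n m = 1 := by
  constructor
  · intro h
    by_contra hg
    have hgn : Nat.gcd n m ∣ n := Nat.gcd_dvd_left n m
    have hgm : Nat.gcd n m ∣ m := Nat.gcd_dvd_right n m
    have hgpos : 0 < Nat.gcd n m := Nat.gcd_pos_of_pos_left m (by omega)
    have hg2 : 2 ≤ Nat.gcd n m := by omega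
    obtain ⟨b, hb⟩ := hgn
    obtain ⟨a, ha⟩ := hgm
    have hb0 : 0 < b := by
      rcases Nat.eq_zero_or_pos b with rfl | h'
      · omega
      · exact h'
    have hbn : b < n := by nlinarith
    refine h b hb0 hbn ⟨a, ?_⟩
    rw [ha]
    conv_rhs => rw [hb]
    ring
  · intro h j hj1 hj2 hdvd
    have hle := Nat.le_of_dvd hj1 (Nat.Coprime.dvd_of_dvd_mul_right h hdvd)
    omega

/-- The rank of `C_{n,k}` over `ℂ` equals `n − 1` if and only
if `gcd(n,k) = 1` and `gcd(n,k+1) = 1`. -/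
theorem rank_Cnk_eq_sub_one_iff (n k : ℕ) (hn : 3 ≤ n) (hk1 : 1 ≤ k)
    (hk2 : 2 * k < n) :
    (Cnk n k).rank = n - 1 ↔ (Nat.gcd n k = 1 ∧ Nat.gcd n (k + 1) = 1) := by
  haveI : NeZero n := ⟨by omega⟩
  have hn0 : (n : ℕ) ≠ 0 := by omega
  set ω : ℂ := Complex.exp (2 * Real.pi * Complex.I / n) with hωdef
  have hω : IsPrimitiveRoot ω n := Complex.isPrimitiveRoot_exp n hn0
  have hωn : ω ^ n = 1 := hω.pow_eq_one
  set F : Matrix (Fin n) (Fin n) ℂ := Matrix.vandermonde (fun i : Fin n => ω ^ (i : ℕ)) with hF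
  set d : Fin n → ℂ := fun j => ∑ t : Fin n, rVec n k t.val * (ω ^ (j : ℕ)) ^ (t : ℕ) with hd
  -- F is invertible
  have hdetF : IsUnit F.det := by
    rw [isUnit_iff_ne_zero, hF, Matrix.det_vandermonde_ne_zero_iff]
    intro i j hij
    exact Fin.ext (hω.pow_inj i.isLt j.isLt hij)
  -- the matrix identity
  have hmat : Cnk n k * F = F * Matrix.diagonal d := by
    ext i j
    rw [Matrix.mul_apply, Matrix.mul_diagonal]
    have := Fintype.sum_equiv (Equiv.addRight i)
      (fun t : Fin n => ω ^ ((i : ℕ) * (j : ℕ)) * (rVec n k t.val * (ω ^ (j : ℕ)) ^ (t : ℕ)))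
      (fun m : Fin n => Cnk n k i m * F m j) ?_
    · rw [← this, ← Finset.mul_sum, hd, hF]
      simp only [Matrix.vandermonde_apply]
      rw [← pow_mul]
    · intro t
      simp only [Equiv.coe_addRight, Cnk, Matrix.of_apply, hF, Matrix.vandermonde_apply]
      have hval : ((t + i : Fin n) : ℕ) = ((t : ℕ) + (i : ℕ)) % n := Fin.val_add t i
      rw [hval, mod_helper n t.val i.val t.isLt i.isLt]
      rw [show (ω ^ (((t : ℕ) + (i : ℕ)) % n)) ^ (j : ℕ)
            = (ω ^ ((t : ℕ) + (i : ℕ))) ^ (j : ℕ) by rw [pow_val_mod hωn]]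
      simp only [← pow_mul]
      rw [show ((t : ℕ) + (i : ℕ)) * (j : ℕ) = (i : ℕ) * (j : ℕ) + (j : ℕ) * (t : ℕ) from by
        ring, pow_add]
      ring
  -- rank computation
  have hrank : (Cnk n k).rank = Fintype.card {j : Fin n // d j ≠ 0} := by
    rw [← Matrix.rank_mul_eq_left_of_isUnit_det F (Cnk n k) hdetF, hmat,
      Matrix.rank_mul_eq_right_of_isUnit_det F (Matrix.diagonal d) hdetF,
      Matrix.rank_diagonal]
  -- d 0 = 0
  have hd0 : d 0 = 0 := by
    rw [hd]
    simp only [Fin.val_zero, pow_zero, one_pow]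
    have := sum_rVec_eq n k hk2 1
    simp only [one_pow] at this
    rw [this]
    simp only [Finset.sum_const, Nat.card_Ico, nsmul_eq_mul, mul_one]
    have h1 : k + 1 - 1 = k := by omega
    have h2 : n - (n - k) = k := by omega
    rw [h1, h2, sub_self]
  -- card statement
  have hcard : (Cnk n k).rank = n - 1 ↔ ∀ j : Fin n, j ≠ 0 → d j ≠ 0 := by
    rw [hrank, Fintype.card_subtype]
    have hsub : Finset.univ.filter (fun j : Fin n => d j ≠ 0) ⊆ Finset.univ.erase 0 := by
      intro j hj
      simp only [Finset.mem_filter] at hj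
      refine Finset.mem_erase.mpr ⟨?_, Finset.mem_univ _⟩
      rintro rfl; exact hj.2 hd0
    have hcarde : (Finset.univ.erase (0 : Fin n)).card = n - 1 := by
      rw [Finset.card_erase_of_mem (Finset.mem_univ _), Finset.card_univ, Fintype.card_fin]
    constructor
    · intro hc j hj
      have heq := Finset.eq_of_subset_of_card_le hsub (by omega)
      have : j ∈ Finset.univ.erase (0 : Fin n) := Finset.mem_erase.mpr ⟨hj, Finset.mem_univ _⟩
      rw [← heq] at this
      exact (Finset.mem_filter.mp this).2
    · intro hall
      have heq : Finset.univ.filter (fun j : Fin n => d j ≠ 0) = Finset.univ.erase 0 := by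
        refine Finset.Subset.antisymm hsub fun j hj => ?_
        simp only [Finset.mem_erase] at hj
        exact Finset.mem_filter.mpr ⟨Finset.mem_univ _, hall j hj.1⟩
      rw [heq, hcarde]
  rw [hcard]
  -- translate nonvanishing into gcd conditions
  have hdval : ∀ m : Fin n, d m = ∑ t : Fin n, rVec n k t.val * (ω ^ (m : ℕ)) ^ (t : ℕ) :=
    fun m => rfl
  have hstep : (∀ j : Fin n, j ≠ 0 → d j ≠ 0) ↔
      (∀ j : ℕ, 0 < j → j < n → ¬ n ∣ j * k) ∧ (∀ j : ℕ, 0 < j → j < n → ¬ n ∣ j * (k + 1)) := by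
    have hzfacts : ∀ j : ℕ, 0 < j → j < n →
        (ω ^ j) ^ n = 1 ∧ ω ^ j ≠ 1 ∧ ω ^ j ≠ 0 := by
      intro j hj1 hj2
      have hzn : (ω ^ j) ^ n = 1 := by rw [← pow_mul, mul_comm, pow_mul, hωn, one_pow]
      refine ⟨hzn, hω.pow_ne_one_of_pos_of_lt hj1.ne' hj2, fun hzz => ?_⟩
      rw [hzz, zero_pow hn0] at hzn
      exact zero_ne_one hzn
    constructor
    · intro h
      constructor <;> intro j hj1 hj2 hdvd
      · have hne := h ⟨j, hj2⟩ (by simp [Fin.ext_iff]; omega)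
        rw [hdval ⟨j, hj2⟩] at hne
        simp only [Fin.val_mk] at hne
        obtain ⟨hzn, hz1, hz0⟩ := hzfacts j hj1 hj2
        have hid := key_identity n k hk2 (ω ^ j) hzn
        have hzk : (ω ^ j) ^ k = 1 := by
          rw [← pow_mul]; exact (hω.pow_eq_one_iff_dvd _).mpr hdvd
        rw [hzk, sub_self, zero_mul] at hid
        rcases mul_eq_zero.mp hid with h' | h'
        · rcases mul_eq_zero.mp h' with h'' | h''
          · exact hz1 (sub_eq_zero.mp h'')
          · exact one_ne_zero h''
        · exact hne h'
      · have hne := h ⟨j, hj2⟩ (by simp [Fin.ext_iff]; omega)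
        rw [hdval ⟨j, hj2⟩] at hne
        simp only [Fin.val_mk] at hne
        obtain ⟨hzn, hz1, hz0⟩ := hzfacts j hj1 hj2
        have hid := key_identity n k hk2 (ω ^ j) hzn
        have hzk : (ω ^ j) ^ (k + 1) = 1 := by
          rw [← pow_mul]; exact (hω.pow_eq_one_iff_dvd _).mpr hdvd
        rw [hzk, sub_self, mul_zero] at hid
        rcases mul_eq_zero.mp hid with h' | h'
        · rcases mul_eq_zero.mp h' with h'' | h''
          · exact hz1 (sub_eq_zero.mp h'')
          · exact hz0 ((pow_eq_zero_iff (by omega : k ≠ 0)).mp h'')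
        · exact hne h'
    · rintro ⟨h1, h2⟩ j hj
      have hj1 : 0 < (j : ℕ) := by
        rcases Nat.eq_zero_or_pos (j : ℕ) with h' | h'
        · exact absurd (Fin.ext h' : j = 0) hj
        · exact h'
      obtain ⟨hzn, hz1, hz0⟩ := hzfacts (j : ℕ) hj1 j.isLt
      have hid := key_identity n k hk2 (ω ^ (j : ℕ)) hzn
      intro hdz
      rw [hdval j] at hdz
      rw [hdz, mul_zero] at hid
      rcases mul_eq_zero.mp hid.symm with h' | h'
      · have hzk : (ω ^ (j : ℕ)) ^ k = 1 := sub_eq_zero.mp h'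
        rw [← pow_mul] at hzk
        exact h1 j hj1 j.isLt ((hω.pow_eq_one_iff_dvd _).mp hzk)
      · have hzk : (ω ^ (j : ℕ)) ^ (k + 1) = 1 := sub_eq_zero.mp h'
        rw [← pow_mul] at hzk
        exact h2 j hj1 j.isLt ((hω.pow_eq_one_iff_dvd _).mp hzk)
  rw [hstep, dvd_forall_iff_gcd n k hn, dvd_forall_iff_gcd n (k + 1) hn]
end

section
/- Let n ≥ 3, 1 ≤ k < n/2, d = gcd(n,k), and suppose d > 1. Let I = (i_0,…,i_{d−1}) be a sequence of zeros and ones with i_0 = 0, and let ρ_0,…,ρ_{n−1} denote the rows of C_{n,k,I}. Then ∑_{j=0}^{n/d − 1} ρ_{dj} = 0 (the zero vector in ℂ^n), and consequently the rank of C_{n,k,I} over ℂ is at most n − 2. -/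
open BigOperators Matrix

lemma dvd_shift (d c0 x : ℕ) (hd : 0 < d) (hc0 : c0 < d) :
    d ∣ x + (d - c0) ↔ x % d = c0 := by
  constructor
  · intro h
    have h1 : x + (d - c0) ≡ 0 [MOD d] := (Nat.modEq_zero_iff_dvd).2 h
    have h2 : c0 + (d - c0) ≡ 0 [MOD d] := by
      rw [show c0 + (d - c0) = d from by omega]
      exact (Nat.modEq_zero_iff_dvd).2 dvd_rfl
    have h4 : x ≡ c0 [MOD d] := (h1.trans h2.symm).add_right_cancel' _
    have := h4
    unfold Nat.ModEq at this
    rw [this, Nat.mod_eq_of_lt hc0]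
  · intro h
    have h4 : x ≡ c0 [MOD d] := by
      show x % d = c0 % d
      rw [h, Nat.mod_eq_of_lt hc0]
    have h5 := h4.add_right (d - c0)
    rw [show c0 + (d - c0) = d from by omega] at h5
    exact (Nat.modEq_zero_iff_dvd).1 (h5.trans ((Nat.modEq_zero_iff_dvd).2 dvd_rfl))

lemma mod_sub_mod (d n m : ℕ) (hdn : d ∣ n) (hm : m ≤ n) (hd : 0 < d) :
    (n - m) % d = (d - m % d) % d := by
  have hmd : m % d < d := Nat.mod_lt _ hd
  have h1 : (n - m) + m % d ≡ (d - m % d) + m % d [MOD d] := by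
    rw [show (d - m % d) + m % d = d from by omega]
    calc (n - m) + m % d ≡ (n - m) + m [MOD d] :=
          Nat.ModEq.add_left _ (Nat.mod_modEq m d)
      _ = n := by omega
      _ ≡ 0 [MOD d] := (Nat.modEq_zero_iff_dvd).2 hdn
      _ ≡ d [MOD d] := ((Nat.modEq_zero_iff_dvd).2 dvd_rfl).symm
  exact h1.add_right_cancel' _

lemma count_le (d c0 : ℕ) (hd : 0 < d) (hc0 : c0 < d) (l : ℕ) :
    ((Finset.range (l+1)).filter (fun m => m % d = c0 ∧ 1 ≤ m)).card
      = if c0 = 0 then l / d else (l + d - c0) / d := by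
  induction l with
  | zero =>
    rw [Finset.range_one, Finset.filter_singleton, if_neg (by omega)]
    simp only [Finset.card_empty]
    split_ifs with h
    · simp
    · exact (Nat.div_eq_of_lt (by omega)).symm
  | succ l ih =>
    rw [Finset.range_add_one, Finset.filter_insert]
    by_cases hm : (l + 1) % d = c0
    · rw [if_pos ⟨hm, by omega⟩, Finset.card_insert_of_notMem (by simp), ih]
      split_ifs with h
      · subst h
        rw [Nat.succ_div, if_pos (Nat.dvd_of_mod_eq_zero hm)]
      · rw [show l + 1 + d - c0 = (l + d - c0) + 1 from by omega, Nat.succ_div,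
          if_pos]
        rw [show l + d - c0 + 1 = (l+1) + (d - c0) from by omega]
        exact (dvd_shift d c0 (l+1) hd hc0).2 hm
    · rw [if_neg (by tauto), ih]
      split_ifs with h
      · subst h
        rw [Nat.succ_div, if_neg (fun hdvd => hm (Nat.mod_eq_zero_of_dvd hdvd)), add_zero]
      · rw [show l + 1 + d - c0 = (l + d - c0) + 1 from by omega, Nat.succ_div,
          if_neg, add_zero]
        rw [show l + d - c0 + 1 = (l+1) + (d - c0) from by omega]
        exact fun hdvd => hm ((dvd_shift d c0 (l+1) hd hc0).1 hdvd)

lemma class_sum (n d k ε c0 : ℕ) (hdn : d ∣ n) (hdk : d ∣ k) (hd : 2 ≤ d)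
    (hk : 1 ≤ k) (hkn : 2*k < n) (hε : ε ≤ 1) (hc0 : c0 < d) :
    ∑ m ∈ (Finset.range n).filter (fun m => m % d = c0), rVec n (k-ε) m = 0 := by
  have hdpos : 0 < d := by omega
  have hkd : d ≤ k := Nat.le_of_dvd hk hdk
  set l := k - ε with hl
  have hln : 2*l < n := by omega
  have hl1 : 1 ≤ l := by omega
  have step1 : ∀ m ∈ (Finset.range n).filter (fun m => m % d = c0),
      rVec n l m = (if 1 ≤ m ∧ m ≤ l then (1:ℂ) else 0) - (if n - l ≤ m then 1 else 0) := by
    intro m hm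
    have hmn : m < n := Finset.mem_range.1 (Finset.mem_filter.1 hm).1
    unfold rVec
    by_cases h0 : m = 0
    · subst h0; rw [if_pos rfl, if_neg (by omega), if_neg (by omega)]; ring
    · rw [if_neg h0]
      by_cases h1 : m ≤ l
      · rw [if_pos h1, if_pos ⟨by omega, h1⟩, if_neg (by omega)]; ring
      · rw [if_neg h1, if_neg (show ¬(1 ≤ m ∧ m ≤ l) from by omega)]
        by_cases h2 : n - l ≤ m
        · rw [if_pos h2, if_pos h2]; ring
        · rw [if_neg h2, if_neg h2]; ring
  rw [Finset.sum_congr rfl step1, Finset.sum_sub_distrib, Finset.sum_boole, Finset.sum_boole,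
    sub_eq_zero]
  norm_cast
  rw [Finset.filter_filter, Finset.filter_filter]
  set c1 := (d - c0) % d with hc1def
  have hc1 : c1 < d := Nat.mod_lt _ hdpos
  have e1 : ((Finset.range n).filter (fun m => m % d = c0 ∧ (1 ≤ m ∧ m ≤ l)))
      = ((Finset.range (l+1)).filter (fun m => m % d = c0 ∧ 1 ≤ m)) := by
    ext m
    simp only [Finset.mem_filter, Finset.mem_range]
    constructor
    · rintro ⟨h1, h2, h3, h4⟩; exact ⟨by omega, h2, h3⟩
    · rintro ⟨h1, h2, h3⟩; exact ⟨by omega, h2, h3, by omega⟩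
  have e2 : ((Finset.range n).filter (fun m => m % d = c0 ∧ n - l ≤ m)).card
      = ((Finset.range (l+1)).filter (fun m => m % d = c1 ∧ 1 ≤ m)).card := by
    apply Finset.card_bij' (fun m _ => n - m) (fun m _ => n - m)
    · intro m hm
      simp only [Finset.mem_filter, Finset.mem_range] at hm ⊢
      obtain ⟨h1, h2, h3⟩ := hm
      refine ⟨by omega, ?_, by omega⟩
      rw [mod_sub_mod d n m hdn (by omega) hdpos, h2]
    · intro m hm
      simp only [Finset.mem_filter, Finset.mem_range] at hm ⊢
      obtain ⟨h1, h2, h3⟩ := hm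
      refine ⟨by omega, ?_, by omega⟩
      rw [mod_sub_mod d n m hdn (by omega) hdpos, h2]
      rcases Nat.eq_zero_or_pos c0 with h | h
      · have hc1v : c1 = 0 := by rw [hc1def, h, Nat.sub_zero, Nat.mod_self]
        rw [hc1v, h, Nat.sub_zero, Nat.mod_self]
      · have hc1v : c1 = d - c0 := by rw [hc1def]; exact Nat.mod_eq_of_lt (by omega)
        rw [hc1v, show d - (d - c0) = c0 from by omega, Nat.mod_eq_of_lt hc0]
    · intro m hm
      simp only [Finset.mem_filter, Finset.mem_range] at hm
      omega
    · intro m hm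
      simp only [Finset.mem_filter, Finset.mem_range] at hm
      omega
  rw [e1, e2, count_le d c0 hdpos hc0, count_le d c1 hdpos hc1]
  have key : ∀ x, 1 ≤ x → x < d → (l + d - x)/d = k/d := by
    intro x h1 h2
    rw [show l + d - x = k + (d - x - ε) from by omega, Nat.add_div_of_dvd_right hdk,
      Nat.div_eq_of_lt (show d - x - ε < d by omega), add_zero]
  rcases Nat.eq_zero_or_pos c0 with h | h
  · have : c1 = 0 := by rw [hc1def, h]; simp
    rw [h, this]
  · have hc1pos : 0 < c1 := by
      rw [hc1def, Nat.mod_eq_of_lt (by omega)]; omega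
    rw [if_neg (by omega), if_neg (by omega), key c0 h hc0, key c1 hc1pos hc1]

lemma sum_range_mul_add {M : Type*} [AddCommMonoid M] (f : ℕ → M) (n d s : ℕ)
    (hdn : d ∣ n) (hd : 0 < d) (hs : s < d) :
    ∑ j ∈ Finset.range (n / d), f (d * j + s)
      = ∑ i ∈ (Finset.range n).filter (fun i => i % d = s), f i := by
  refine Finset.sum_nbij' (fun j => d * j + s) (fun i => i / d) ?_ ?_ ?_ ?_ ?_
  · intro j hj
    simp only [Finset.mem_filter, Finset.mem_range] at hj ⊢
    constructor
    · calc d * j + s < d * j + d := by omega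
        _ = d * (j + 1) := by ring
        _ ≤ d * (n / d) := Nat.mul_le_mul_left d (by omega)
        _ = n := Nat.mul_div_cancel' hdn
    · rw [Nat.mul_add_mod, Nat.mod_eq_of_lt hs]
  · intro i hi
    simp only [Finset.mem_filter, Finset.mem_range] at hi ⊢
    exact Nat.div_lt_div_of_lt_of_dvd hdn hi.1
  · intro j hj
    show (d * j + s) / d = j
    rw [Nat.mul_add_div hd, Nat.div_eq_of_lt hs, add_zero]
  · intro i hi
    simp only [Finset.mem_filter, Finset.mem_range] at hi
    show d * (i / d) + s = i
    rw [← hi.2, Nat.div_add_mod]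
  · intro j hj
    rfl

lemma filter_sum_zero (n k d : ℕ) (hd : 2 ≤ d) (hdn : d ∣ n) (hdk : d ∣ k)
    (hk : 1 ≤ k) (hkn : 2*k < n) (ε s c : ℕ) (hε : ε ≤ 1) (hs : s < d) (hc : c < n) :
    ∑ i ∈ (Finset.range n).filter (fun i => i % d = s), rVec n (k-ε) ((c + n - i) % n) = 0 := by
  have hn : 0 < n := by omega
  have hdpos : 0 < d := by omega
  have hdlen : d ≤ n := Nat.le_of_dvd hn hdn
  set c' := (c + n - s) % d with hc'
  have hc'd : c' < d := Nat.mod_lt _ hdpos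
  have key : ∑ i ∈ (Finset.range n).filter (fun i => i % d = s), rVec n (k-ε) ((c+n-i)%n)
      = ∑ m ∈ (Finset.range n).filter (fun m => m % d = c'), rVec n (k-ε) m := by
    refine Finset.sum_nbij' (fun i => (c + n - i) % n) (fun m => (c + n - m) % n) ?_ ?_ ?_ ?_ ?_
    · intro i hi
      simp only [Finset.mem_filter, Finset.mem_range] at hi ⊢
      obtain ⟨h1, h2⟩ := hi
      refine ⟨Nat.mod_lt _ hn, ?_⟩
      rw [Nat.mod_mod_of_dvd _ hdn, hc']
      have hmod : i ≡ s [MOD d] := by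
        show i % d = s % d
        rw [h2, Nat.mod_eq_of_lt hs]
      have h3 : (c + n - i) + i ≡ (c + n - s) + s [MOD d] := by
        rw [show (c + n - i) + i = c + n from by omega, show (c + n - s) + s = c + n from by omega]
      exact (Nat.ModEq.add_right_cancel hmod h3 : _)
    · intro m hm
      simp only [Finset.mem_filter, Finset.mem_range] at hm ⊢
      obtain ⟨h1, h2⟩ := hm
      refine ⟨Nat.mod_lt _ hn, ?_⟩
      rw [Nat.mod_mod_of_dvd _ hdn]
      have hmod : m ≡ (c + n - s) [MOD d] := by
        show m % d = (c + n - s) % d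
        rw [h2, hc']
      have h3 : (c + n - m) + m ≡ s + m [MOD d] := by
        calc (c + n - m) + m = s + (c + n - s) := by omega
          _ ≡ s + m [MOD d] := Nat.ModEq.add_left s hmod.symm
      have h4 : (c + n - m) ≡ s [MOD d] := h3.add_right_cancel' m
      rw [(h4 : _ % d = _ % d), Nat.mod_eq_of_lt hs]
    · intro i hi
      simp only [Finset.mem_filter, Finset.mem_range] at hi
      obtain ⟨h1, _⟩ := hi
      show (c + n - ((c + n - i) % n)) % n = i
      set x := (c + n - i) % n with hx
      have hxn : x < n := Nat.mod_lt _ hn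
      have hxe : x ≡ (c + n - i) [MOD n] := (Nat.mod_modEq _ _).symm.symm
      have h3 : (c + n - x) + x ≡ i + x [MOD n] := by
        calc (c + n - x) + x = i + (c + n - i) := by omega
          _ ≡ i + x [MOD n] := Nat.ModEq.add_left i (Nat.mod_modEq _ _).symm
      have h4 : (c + n - x) ≡ i [MOD n] := h3.add_right_cancel' x
      rw [(h4 : _ % n = _ % n), Nat.mod_eq_of_lt h1]
    · intro m hm
      simp only [Finset.mem_filter, Finset.mem_range] at hm
      obtain ⟨h1, _⟩ := hm
      show (c + n - ((c + n - m) % n)) % n = m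
      set x := (c + n - m) % n with hx
      have hxn : x < n := Nat.mod_lt _ hn
      have h3 : (c + n - x) + x ≡ m + x [MOD n] := by
        calc (c + n - x) + x = m + (c + n - m) := by omega
          _ ≡ m + x [MOD n] := Nat.ModEq.add_left m (Nat.mod_modEq _ _).symm
      have h4 : (c + n - x) ≡ m [MOD n] := h3.add_right_cancel' x
      rw [(h4 : _ % n = _ % n), Nat.mod_eq_of_lt h1]
    · intro i hi
      rfl
  rw [key]
  exact class_sum n d k ε c' hdn hdk hd hk hkn hε hc'd

/-- If `d = gcd(n,k) > 1` and `I` is a sequence of zeros and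
ones with `i_0 = 0`, then the rows `ρ_0,…,ρ_{n−1}` of `C_{n,k,I}` satisfy
`∑_{j=0}^{n/d−1} ρ_{dj} = 0`, and consequently `rank C_{n,k,I} ≤ n − 2`. -/
theorem CnkI_rows_relation_and_rank (n k : ℕ) (hn : 3 ≤ n) (hk1 : 1 ≤ k)
    (hk2 : 2 * k < n) (hd : 1 < Nat.gcd n k)
    (I : ℕ → ℕ) (hI0 : I 0 = 0) (hI : ∀ s < Nat.gcd n k, I s ≤ 1) :
    (∑ j : Fin (n / Nat.gcd n k),
        CnkI n k I ⟨Nat.gcd n k * j.val, by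
          exact lt_of_lt_of_le (mul_lt_mul_of_pos_left j.isLt (by omega))
            (Nat.mul_div_cancel' (Nat.gcd_dvd_left n k)).le⟩) = 0 ∧
    (CnkI n k I).rank ≤ n - 2 := by
  have hdn : Nat.gcd n k ∣ n := Nat.gcd_dvd_left n k
  have hdk : Nat.gcd n k ∣ k := Nat.gcd_dvd_right n k
  set d := Nat.gcd n k with hd_def
  have hd2 : 2 ≤ d := hd
  have hn0 : 0 < n := by omega
  -- the key vanishing sums
  have hrowsum : ∀ s, s < d → ∀ c : Fin n,
      ∑ i ∈ (Finset.range n).filter (fun i => i % d = s),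
        rVec n (k - I s) ((c.val + n - i) % n) = 0 := by
    intro s hs c
    exact filter_sum_zero n k d hd2 hdn hdk hk1 hk2 (I s) s c.val (hI s hs) hs c.isLt
  constructor
  · funext c
    simp only [Finset.sum_apply, Pi.zero_apply]
    calc (∑ j : Fin (n / d), CnkI n k I
            ⟨d * j.val, lt_of_lt_of_le (mul_lt_mul_of_pos_left j.isLt (by omega))
              (Nat.mul_div_cancel' (Nat.gcd_dvd_left n k)).le⟩ c)
        = ∑ j : Fin (n / d), rVec n k ((c.val + n - d * j.val) % n) := by
          apply Finset.sum_congr rfl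
          intro j _
          show rVec n (k - I ((d * j.val) % d)) ((c.val + n - d * j.val) % n) = _
          rw [Nat.mul_mod_right, hI0, Nat.sub_zero]
      _ = ∑ j ∈ Finset.range (n / d), rVec n k ((c.val + n - d * j) % n) :=
          Fin.sum_univ_eq_sum_range (fun j => rVec n k ((c.val + n - d * j) % n)) (n / d)
      _ = ∑ i ∈ (Finset.range n).filter (fun i => i % d = 0),
            rVec n k ((c.val + n - i) % n) := by
          have h := sum_range_mul_add (fun i => rVec n k ((c.val + n - i) % n)) n d 0
            hdn (by omega) (by omega)
          simpa using h
      _ = 0 := by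
          have h := hrowsum 0 (by omega) c
          rwa [hI0, Nat.sub_zero] at h
  · -- rank bound
    set A := CnkI n k I with hA
    have hker : ∀ s, s < d →
        (Aᵀ).mulVecLin (fun i : Fin n => if i.val % d = s then (1:ℂ) else 0) = 0 := by
      intro s hs
      rw [Matrix.mulVecLin_apply, Matrix.mulVec_transpose]
      funext c
      show ∑ i : Fin n, (if i.val % d = s then (1:ℂ) else 0) * A i c = 0
      calc ∑ i : Fin n, (if i.val % d = s then (1:ℂ) else 0) * A i c
          = ∑ i : Fin n, (if i.val % d = s then
              rVec n (k - I (i.val % d)) ((c.val + n - i.val) % n) else 0) := by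
            apply Finset.sum_congr rfl
            intro i _
            by_cases h : i.val % d = s
            · rw [if_pos h, if_pos h, one_mul]
              rfl
            · rw [if_neg h, if_neg h, zero_mul]
        _ = ∑ i ∈ Finset.range n, (if i % d = s then
              rVec n (k - I (i % d)) ((c.val + n - i) % n) else 0) :=
            Fin.sum_univ_eq_sum_range
              (fun i => if i % d = s then
                rVec n (k - I (i % d)) ((c.val + n - i) % n) else 0) n
        _ = ∑ i ∈ (Finset.range n).filter (fun i => i % d = s),
              rVec n (k - I (i % d)) ((c.val + n - i) % n) :=
            (Finset.sum_filter _ _).symm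
        _ = ∑ i ∈ (Finset.range n).filter (fun i => i % d = s),
              rVec n (k - I s) ((c.val + n - i) % n) := by
            apply Finset.sum_congr rfl
            intro i hi
            rw [(Finset.mem_filter.1 hi).2]
        _ = 0 := hrowsum s hs c
    set f := (Aᵀ).mulVecLin with hf
    set v0 : Fin n → ℂ := fun i => if i.val % d = 0 then (1:ℂ) else 0 with hv0
    set v1 : Fin n → ℂ := fun i => if i.val % d = 1 then (1:ℂ) else 0 with hv1
    have hli : LinearIndependent ℂ ![v0, v1] := by
      rw [LinearIndependent.pair_iff]
      intro a b hab
      have h0 := congrFun hab ⟨0, by omega⟩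
      have h1 := congrFun hab ⟨1, by omega⟩
      simp only [Pi.add_apply, Pi.smul_apply, hv0, hv1, Pi.zero_apply, smul_eq_mul] at h0 h1
      rw [Nat.zero_mod] at h0
      rw [Nat.mod_eq_of_lt (by omega)] at h1
      norm_num at h0 h1
      exact ⟨h0, h1⟩
    have hg : ∀ t : Fin 2, ![v0, v1] t ∈ LinearMap.ker f := by
      intro t
      fin_cases t
      · exact LinearMap.mem_ker.2 (hker 0 (by omega))
      · exact LinearMap.mem_ker.2 (hker 1 (by omega))
    set g : Fin 2 → LinearMap.ker f := fun t => ⟨![v0, v1] t, hg t⟩ with hgdef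
    have hcomp : (LinearMap.ker f).subtype ∘ g = ![v0, v1] := by
      funext t; rfl
    have hlig : LinearIndependent ℂ g := by
      apply LinearIndependent.of_comp (LinearMap.ker f).subtype
      rw [hcomp]
      exact hli
    have hdim : 2 ≤ Module.finrank ℂ (LinearMap.ker f) := by
      have := hlig.fintype_card_le_finrank
      simpa using this
    have hrk := LinearMap.finrank_range_add_finrank_ker f
    rw [Module.finrank_fin_fun] at hrk
    have hAT : (Aᵀ).rank = Module.finrank ℂ (LinearMap.range f) := by
      rw [Matrix.rank, hf]
    have htr : (Aᵀ).rank = A.rank := Matrix.rank_transpose A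
    omega
end

section
/- Let n and k be integers with 1 ≤ k < n and gcd(n, k+1) = 1. Then there exist unique positive integers n₁, n₂, k₁, k₂ such that n₁ + n₂ = n, k₁ + k₂ = k + 1, and n₁k₂ − n₂k₁ = 1. -/
open BigOperators Matrix

/-- **Lemma on continued fractions.** For `1 ≤ k < n` with
`gcd(n, k+1) = 1`, there exist unique positive integers `n₁, n₂, k₁, k₂` with
`n₁ + n₂ = n`, `k₁ + k₂ = k + 1` and `n₁k₂ − n₂k₁ = 1`. -/
theorem unique_splitting (n k : ℕ) (hk1 : 1 ≤ k) (hk2 : k < n)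
    (hgcd : Nat.gcd n (k + 1) = 1) :
    ∃! q : ℕ × ℕ × ℕ × ℕ,
      0 < q.1 ∧ 0 < q.2.1 ∧ 0 < q.2.2.1 ∧ 0 < q.2.2.2 ∧
      q.1 + q.2.1 = n ∧ q.2.2.1 + q.2.2.2 = k + 1 ∧
      (q.1 : ℤ) * q.2.2.2 - (q.2.1 : ℤ) * q.2.2.1 = 1 := by
  have hn2 : 2 ≤ n := by omega
  haveI : NeZero n := ⟨by omega⟩
  haveI : Fact (1 < n) := ⟨by omega⟩
  have hcop : Nat.Coprime (k + 1) n := Nat.Coprime.symm hgcd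
  have hu : IsUnit ((k + 1 : ℕ) : ZMod n) := (ZMod.isUnit_iff_coprime (k + 1) n).mpr hcop
  set a : ZMod n := ((k + 1 : ℕ) : ZMod n)⁻¹ with ha
  have hmul : ((k + 1 : ℕ) : ZMod n) * a = 1 := ZMod.mul_inv_of_unit _ hu
  set n₁ := a.val with hn1def
  have hn1lt : n₁ < n := ZMod.val_lt a
  have han : ((n₁ : ℕ) : ZMod n) = a := by
    rw [hn1def, ZMod.natCast_val, ZMod.cast_id]
  have hn1pos : 0 < n₁ := by
    rcases Nat.eq_zero_or_pos n₁ with h0 | h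
    · exfalso
      have : a = 0 := by rw [← han, h0]; simp
      rw [this, mul_zero] at hmul
      exact zero_ne_one hmul
    · exact h
  -- the key modular equation
  have hzmod : (n₁ * (k + 1) : ℕ) ≡ 1 [MOD n] := by
    have : ((n₁ * (k + 1) : ℕ) : ZMod n) = ((1 : ℕ) : ZMod n) := by
      rw [Nat.cast_mul, han, Nat.cast_one, mul_comm]
      exact hmul
    exact (ZMod.natCast_eq_natCast_iff _ _ _).mp this
  have h1le : 1 ≤ n₁ * (k + 1) := Nat.succ_le_of_lt (Nat.mul_pos hn1pos (by omega))
  obtain ⟨c, hc⟩ := (Nat.modEq_iff_dvd' h1le).mp hzmod.symm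
  have hkey : n₁ * (k + 1) = n * c + 1 := by omega
  have hcpos : 0 < c := by
    by_contra h
    have : c = 0 := by omega
    rw [this] at hkey
    nlinarith
  have hclt : c < k + 1 := by
    have h1 : n₁ * (k + 1) ≤ (n - 1) * (k + 1) := Nat.mul_le_mul_right _ (by omega)
    have h2 : (n - 1) * (k + 1) < n * (k + 1) :=
      Nat.mul_lt_mul_of_pos_right (by omega) (by omega)
    have : n * c < n * (k + 1) := by omega
    exact Nat.lt_of_mul_lt_mul_left this
  refine ⟨(n₁, n - n₁, c, k + 1 - c), ?_, ?_⟩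
  · dsimp only
    refine ⟨hn1pos, by omega, hcpos, by omega, by omega, by omega, ?_⟩
    have hkey' : (n₁ : ℤ) * (k + 1) = n * c + 1 := by exact_mod_cast hkey
    have e1 : ((n - n₁ : ℕ) : ℤ) = (n : ℤ) - n₁ := by
      rw [Nat.cast_sub hn1lt.le]
    have e2 : ((k + 1 - c : ℕ) : ℤ) = (k + 1 : ℤ) - c := by
      rw [Nat.cast_sub hclt.le]; push_cast; ring
    rw [e1, e2]
    linear_combination hkey'
  · rintro ⟨a', b, c', d⟩ ⟨h1, h2, h3, h4, h5, h6, h7⟩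
    simp only at h1 h2 h3 h4 h5 h6 h7 ⊢
    have h5' : (a' : ℤ) + b = n := by exact_mod_cast h5
    have h6' : (c' : ℤ) + d = k + 1 := by exact_mod_cast h6
    have hkeyq : (a' : ℤ) * (k + 1) = n * c' + 1 := by
      linear_combination h7 - (a' : ℤ) * h6' + (c' : ℤ) * h5'
    have hkeyqn : a' * (k + 1) = n * c' + 1 := by exact_mod_cast hkeyq
    have hza : ((a' : ℕ) : ZMod n) = a := by
      have hz : ((a' * (k + 1) : ℕ) : ZMod n) = ((n * c' + 1 : ℕ) : ZMod n) := by
        rw [hkeyqn]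
      push_cast at hz
      rw [ZMod.natCast_self, zero_mul, zero_add] at hz
      have hmul' := hmul
      push_cast at hmul'
      calc ((a' : ℕ) : ZMod n)
          = ((a' : ℕ) : ZMod n) * (((k : ZMod n) + 1) * a) := by rw [hmul', mul_one]
        _ = (((a' : ℕ) : ZMod n) * ((k : ZMod n) + 1)) * a := by ring
        _ = a := by rw [hz, one_mul]
    have ha'lt : a' < n := by omega
    have ha'eq : a' = n₁ := by
      have hv := ZMod.val_cast_of_lt ha'lt
      rw [hza] at hv
      omega
    have hc'eq : c' = c := by
      rw [ha'eq, hkey] at hkeyqn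
      have : n * c' = n * c := by omega
      exact Nat.eq_of_mul_eq_mul_left (by omega) this
    simp only [Prod.mk.injEq]
    exact ⟨ha'eq, by omega, hc'eq, by omega⟩
end

section
/- Fix an integer n ≥ 2. For an integer α let ᾱ denote its residue in {0,…,n−1}, let g(α) = ᾱ(n−ᾱ)/2 ∈ ℚ, and for integers α, β let h(α,β) = g(α) + g(β) − g(α+β). Then for all integers α, β not divisible by n: (1) h(α,β) is a positive integer; (2) if ᾱ + β̄ ≤ n then h(α−1,β) < h(α,β); (3) if ᾱ + β̄ ≥ n then h(α+1,β) < h(α,β); (4) h(α,β) = 1 if and only if either ᾱ = β̄ = 1 or ᾱ = β̄ = n−1. -/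
open BigOperators Matrix

/-- `resd n a` is the residue of the integer `a` in `{0,…,n−1}`. -/
def resd (n : ℕ) (a : ℤ) : ℤ := a % (n : ℤ)

/-- `g(α) = ᾱ(n−ᾱ)/2 ∈ ℚ`. -/
def gfun (n : ℕ) (a : ℤ) : ℚ := ((resd n a * ((n : ℤ) - resd n a) : ℤ) : ℚ) / 2

/-- `h(α,β) = g(α) + g(β) − g(α+β)`. -/
def hfun (n : ℕ) (a b : ℤ) : ℚ := gfun n a + gfun n b - gfun n (a + b)

lemma hfun_eq (n : ℕ) (hn : 2 ≤ n) (a b : ℤ) :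
    hfun n a b = if a % (n : ℤ) + b % (n : ℤ) < (n : ℤ)
      then ((a % (n : ℤ) * (b % (n : ℤ)) : ℤ) : ℚ)
      else ((((n : ℤ) - a % (n : ℤ)) * ((n : ℤ) - b % (n : ℤ)) : ℤ) : ℚ) := by
  have hn0 : (0 : ℤ) < (n : ℤ) := by exact_mod_cast (by omega : 0 < n)
  have hA0 : 0 ≤ a % (n : ℤ) := Int.emod_nonneg a hn0.ne'
  have hAn : a % (n : ℤ) < n := Int.emod_lt_of_pos a hn0
  have hB0 : 0 ≤ b % (n : ℤ) := Int.emod_nonneg b hn0.ne'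
  have hBn : b % (n : ℤ) < n := Int.emod_lt_of_pos b hn0
  have hab : (a + b) % (n : ℤ) = (a % n + b % n) % n := Int.add_emod a b n
  split_ifs with h
  · have hC : (a % (n:ℤ) + b % n) % n = a % n + b % n :=
      Int.emod_eq_of_lt (by linarith) h
    unfold hfun gfun resd
    rw [hab, hC]
    push_cast
    ring
  · have hC : (a % (n:ℤ) + b % n) % n = a % n + b % n - n := by
      rw [← Int.sub_emod_right]
      exact Int.emod_eq_of_lt (by omega) (by omega)
    unfold hfun gfun resd
    rw [hab, hC]
    push_cast
    ring

/-- For integers `α, β` not divisible by `n ≥ 2`: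
(1) `h(α,β)` is a positive integer;
(2) if `ᾱ + β̄ ≤ n` then `h(α−1,β) < h(α,β)`;
(3) if `ᾱ + β̄ ≥ n` then `h(α+1,β) < h(α,β)`;
(4) `h(α,β) = 1` iff `ᾱ = β̄ = 1` or `ᾱ = β̄ = n−1`. -/
theorem hfun_properties (n : ℕ) (hn : 2 ≤ n) (a b : ℤ)
    (ha : ¬ (n : ℤ) ∣ a) (hb : ¬ (n : ℤ) ∣ b) :
    (∃ m : ℕ, 0 < m ∧ hfun n a b = (m : ℚ)) ∧
    (resd n a + resd n b ≤ (n : ℤ) → hfun n (a - 1) b < hfun n a b) ∧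
    ((n : ℤ) ≤ resd n a + resd n b → hfun n (a + 1) b < hfun n a b) ∧
    (hfun n a b = 1 ↔
      (resd n a = 1 ∧ resd n b = 1) ∨
      (resd n a = (n : ℤ) - 1 ∧ resd n b = (n : ℤ) - 1)) := by
  have hn0 : (0 : ℤ) < (n : ℤ) := by exact_mod_cast (by omega : 0 < n)
  have hA0 : 0 ≤ a % (n : ℤ) := Int.emod_nonneg a hn0.ne'
  have hAn : a % (n : ℤ) < n := Int.emod_lt_of_pos a hn0
  have hB0 : 0 ≤ b % (n : ℤ) := Int.emod_nonneg b hn0.ne'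
  have hBn : b % (n : ℤ) < n := Int.emod_lt_of_pos b hn0
  have hA1 : 1 ≤ a % (n : ℤ) := by
    have : a % (n : ℤ) ≠ 0 := fun h => ha (Int.dvd_of_emod_eq_zero h)
    omega
  have hB1 : 1 ≤ b % (n : ℤ) := by
    have : b % (n : ℤ) ≠ 0 := fun h => hb (Int.dvd_of_emod_eq_zero h)
    omega
  have hn2 : (2 : ℤ) ≤ (n : ℤ) := by exact_mod_cast hn
  refine ⟨?_, ?_, ?_, ?_⟩
  · rw [hfun_eq n hn a b]
    split_ifs with h
    · have hpos : 0 < a % (n:ℤ) * (b % n) := mul_pos (by omega) (by omega)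
      refine ⟨(a % (n:ℤ) * (b % n)).toNat, by omega, ?_⟩
      exact_mod_cast congrArg (fun x : ℤ => (x : ℚ)) (Int.toNat_of_nonneg hpos.le).symm
    · have hpos : 0 < ((n:ℤ) - a % n) * ((n:ℤ) - b % n) := mul_pos (by omega) (by omega)
      refine ⟨(((n:ℤ) - a % n) * ((n:ℤ) - b % n)).toNat, by omega, ?_⟩
      exact_mod_cast congrArg (fun x : ℤ => (x : ℚ)) (Int.toNat_of_nonneg hpos.le).symm
  · intro hle
    have hres : (a - 1) % (n : ℤ) = a % n - 1 := by
      rw [Int.sub_emod]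
      have h1 : (1 : ℤ) % n = 1 := Int.emod_eq_of_lt (by norm_num) (by omega)
      rw [h1]
      exact Int.emod_eq_of_lt (by omega) (by omega)
    unfold resd at hle
    rw [hfun_eq n hn a b, hfun_eq n hn (a - 1) b, hres]
    split_ifs with h1 h2 h2
    · have : (a % (n:ℤ) - 1) * (b % n) < a % n * (b % n) := by nlinarith
      exact_mod_cast this
    · have hAB : a % (n:ℤ) + b % n = n := by omega
      have : (a % (n:ℤ) - 1) * (b % n) < ((n:ℤ) - a % n) * ((n:ℤ) - b % n) := by nlinarith
      exact_mod_cast this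
    · exfalso; omega
    · exfalso; omega
  · intro hge
    unfold resd at hge
    by_cases hA : a % (n : ℤ) = (n : ℤ) - 1
    · have hres : (a + 1) % (n : ℤ) = 0 := by
        rw [Int.add_emod, hA]
        have h1 : (1 : ℤ) % n = 1 := Int.emod_eq_of_lt (by norm_num) (by omega)
        rw [h1]
        simp
      rw [hfun_eq n hn a b, hfun_eq n hn (a + 1) b, hres]
      split_ifs with h1 h2 h2
      · exfalso; omega
      · have : (0 : ℤ) * (b % n) < ((n:ℤ) - a % n) * ((n:ℤ) - b % n) := by nlinarith
        exact_mod_cast this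
      · exfalso; omega
      · exfalso; omega
    · have hres : (a + 1) % (n : ℤ) = a % n + 1 := by
        rw [Int.add_emod]
        have h1 : (1 : ℤ) % n = 1 := Int.emod_eq_of_lt (by norm_num) (by omega)
        rw [h1]
        exact Int.emod_eq_of_lt (by omega) (by omega)
      rw [hfun_eq n hn a b, hfun_eq n hn (a + 1) b, hres]
      split_ifs with h1 h2 h2
      · exfalso; omega
      · exfalso; omega
      · exfalso; omega
      · have : ((n:ℤ) - (a % n + 1)) * ((n:ℤ) - b % n) <
            ((n:ℤ) - a % n) * ((n:ℤ) - b % n) := by nlinarith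
        exact_mod_cast this
  · unfold resd
    rw [hfun_eq n hn a b]
    constructor
    · intro heq
      split_ifs at heq with h
      · have h1 : a % (n:ℤ) * (b % n) = 1 := by exact_mod_cast heq
        have : a % (n:ℤ) + b % n ≤ 2 := by nlinarith
        left; omega
      · have h1 : ((n:ℤ) - a % n) * ((n:ℤ) - b % n) = 1 := by exact_mod_cast heq
        have : ((n:ℤ) - a % n) + ((n:ℤ) - b % n) ≤ 2 := by nlinarith
        right; omega
    · rintro (⟨hA, hB⟩ | ⟨hA, hB⟩) <;> rw [hA, hB] <;> split_ifs with h
      · norm_num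
      · have : (n : ℤ) = 2 := by omega
        rw [this]; norm_num
      · exfalso; omega
      · have h1 : ((n:ℤ) - ((n:ℤ) - 1)) * ((n:ℤ) - ((n:ℤ) - 1)) = 1 := by ring
        rw [h1]; norm_num
end

section
/- Let n ≥ 3 and 1 ≤ k < n with gcd(n,k) = 1 and gcd(n,k+1) = 1, and let k′ be the unique integer with 1 ≤ k′ < n and k·k′ ≡ 1 (mod n). Then for all integers i, j (indices of Π read modulo n): Π_{i+1,j} + Π_{i+k′,j} − Π_{i,j} − Π_{i+k′+1,j} equals n if i ≡ j (mod n), equals −n if j − i ≡ k′ + 1 (mod n), and equals 0 otherwise. -/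
open BigOperators Matrix

/-- The matrix `Π = Π_{n,k}` as a function of integer indices read modulo `n`:
`Π_{ij} = ((j−i) mod n) + ((k(j−i)) mod n) − n` for `i ≢ j (mod n)`, and
`Π_{ij} = 0` for `i ≡ j (mod n)`. -/
def PiZ (n k : ℕ) (i j : ℤ) : ℤ :=
  if (j - i) % (n : ℤ) = 0 then 0
  else (j - i) % (n : ℤ) + ((k : ℤ) * (j - i)) % (n : ℤ) - n

private lemma emod_cases' (N a : ℤ) (h0 : 0 < N) (h1 : -N ≤ a) (h2 : a < N) :
    a % N = a ∨ a % N = a + N := by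
  rcases le_or_gt 0 a with h | h
  · exact Or.inl (Int.emod_eq_of_lt h h2)
  · right
    have h3 : (a + N * 1) % N = a % N := Int.add_mul_emod_self_left a N 1
    rw [← h3]
    have h4 : a + N * 1 = a + N := by ring
    rw [h4]
    exact Int.emod_eq_of_lt (by omega) (by omega)

private lemma dvd_shift' (N a b t : ℤ) (h : a = b + N * t) : N ∣ a ↔ N ∣ b := by
  constructor <;> rintro ⟨c, hc⟩
  · exact ⟨c - t, by linear_combination hc - h⟩
  · exact ⟨c + t, by linear_combination hc + h⟩

private lemma dvd_char' (N q r c a : ℤ) (hN : 0 < N) (ha : a = (r - c) + N * q)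
    (hr0 : 0 ≤ r) (hrN : r < N) (hc0 : 0 ≤ c) (hcN : c < N) : N ∣ a ↔ r = c := by
  constructor
  · intro h
    have h2 : N ∣ r - c := by
      have h3 : r - c = a - N * q := by linear_combination -ha
      rw [h3]
      exact dvd_sub h (Dvd.intro q rfl)
    have h4 := Int.eq_zero_of_abs_lt_dvd h2 (by rw [abs_lt]; omega)
    omega
  · intro h
    exact ⟨q, by linear_combination ha + h⟩

/-- For `gcd(n,k) = gcd(n,k+1) = 1` and `k′` the inverse of
`k` mod `n`, the combination `Π_{i+1,j} + Π_{i+k′,j} − Π_{i,j} − Π_{i+k′+1,j}`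
equals `n` if `i ≡ j (mod n)`, `−n` if `j − i ≡ k′+1 (mod n)`, and `0` otherwise. -/
theorem Pi_telescoping (n k k' : ℕ) (hn : 3 ≤ n) (hk1 : 1 ≤ k) (hk2 : k < n)
    (h1 : Nat.gcd n k = 1) (h2 : Nat.gcd n (k + 1) = 1)
    (hk'1 : 1 ≤ k') (hk'2 : k' < n) (hk'3 : (k * k') % n = 1) :
    ∀ i j : ℤ,
      PiZ n k (i + 1) j + PiZ n k (i + k') j - PiZ n k i j
          - PiZ n k (i + k' + 1) j =
        if (i - j) % (n : ℤ) = 0 then (n : ℤ)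
        else if (j - i - (k' + 1)) % (n : ℤ) = 0 then -(n : ℤ)
        else 0 := by
  intro i j
  have hN : 0 < (n : ℤ) := by omega
  have hkk : k + 1 < n := by
    rcases Nat.lt_or_ge (k + 1) n with h | h
    · exact h
    · exfalso
      have hkn : k + 1 = n := by omega
      rw [hkn, Nat.gcd_self] at h2
      omega
  have hmz : ((k : ℤ) * (k' : ℤ)) % (n : ℤ) = 1 := by
    have h := congrArg (fun t : ℕ => (t : ℤ)) hk'3
    push_cast at h
    exact h
  obtain ⟨m, hm⟩ : ∃ m : ℤ, (k : ℤ) * (k' : ℤ) = (n : ℤ) * m + 1 :=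
    ⟨(k : ℤ) * (k' : ℤ) / (n : ℤ), by
      linarith [Int.mul_ediv_add_emod ((k : ℤ) * (k' : ℤ)) (n : ℤ), hmz]⟩
  have hinv : ∀ u : ℤ, (n : ℤ) ∣ (k : ℤ) * u → (n : ℤ) ∣ u := by
    rintro u ⟨c, hc⟩
    exact ⟨(k' : ℤ) * c - m * u, by linear_combination (k' : ℤ) * hc - u * hm⟩
  have hdvdmul : ∀ u : ℤ, ((n : ℤ) ∣ u ↔ (n : ℤ) ∣ (k : ℤ) * u) :=
    fun u => ⟨fun h => h.mul_left _, hinv u⟩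
  have hk'n : k' + 1 < n := by
    by_contra h
    have hk'e : (k' : ℤ) = (n : ℤ) - 1 := by omega
    have hd : (n : ℤ) ∣ (k : ℤ) + 1 :=
      ⟨(k : ℤ) - m, by linear_combination (k : ℤ) * hk'e - hm⟩
    have hle := Int.le_of_dvd (by omega) hd
    omega
  obtain ⟨q, r, hq, hr0, hrN⟩ : ∃ q r : ℤ, j - i = (n : ℤ) * q + r ∧ 0 ≤ r ∧ r < n :=
    ⟨(j - i) / n, (j - i) % n, (Int.mul_ediv_add_emod _ _).symm,
      Int.emod_nonneg _ (by omega), Int.emod_lt_of_pos _ hN⟩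
  obtain ⟨p, s, hp, hs0, hsN⟩ : ∃ p s : ℤ, (k : ℤ) * (j - i) = (n : ℤ) * p + s ∧ 0 ≤ s ∧ s < n :=
    ⟨((k : ℤ) * (j - i)) / n, ((k : ℤ) * (j - i)) % n, (Int.mul_ediv_add_emod _ _).symm,
      Int.emod_nonneg _ (by omega), Int.emod_lt_of_pos _ hN⟩
  have hC0 : r = 0 ↔ s = 0 := by
    rw [← dvd_char' (n : ℤ) q r 0 (j - i) hN (by linear_combination hq) hr0 hrN le_rfl hN,
        ← dvd_char' (n : ℤ) p s 0 ((k : ℤ) * (j - i)) hN (by linear_combination hp) hs0 hsN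
          le_rfl hN]
    exact hdvdmul _
  have hC1 : r = 1 ↔ s = (k : ℤ) := by
    rw [← dvd_char' (n : ℤ) q r 1 (j - i - 1) hN (by linear_combination hq) hr0 hrN
          (by omega) (by omega),
        ← dvd_char' (n : ℤ) p s (k : ℤ) ((k : ℤ) * (j - i) - k) hN (by linear_combination hp)
          hs0 hsN (by omega) (by omega),
        hdvdmul (j - i - 1),
        dvd_shift' (n : ℤ) ((k : ℤ) * (j - i - 1)) ((k : ℤ) * (j - i) - k) 0 (by ring)]
  have hCk' : r = (k' : ℤ) ↔ s = 1 := by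
    rw [← dvd_char' (n : ℤ) q r (k' : ℤ) (j - i - (k' : ℤ)) hN (by linear_combination hq)
          hr0 hrN (by omega) (by omega),
        ← dvd_char' (n : ℤ) p s 1 ((k : ℤ) * (j - i) - 1) hN (by linear_combination hp)
          hs0 hsN (by omega) (by omega),
        hdvdmul (j - i - (k' : ℤ)),
        dvd_shift' (n : ℤ) ((k : ℤ) * (j - i - (k' : ℤ))) ((k : ℤ) * (j - i) - 1) (-m)
          (by linear_combination -hm)]
  have hCk1 : r = (k' : ℤ) + 1 ↔ s = (k : ℤ) + 1 := by
    rw [← dvd_char' (n : ℤ) q r ((k' : ℤ) + 1) (j - i - ((k' : ℤ) + 1)) hN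
          (by linear_combination hq) hr0 hrN (by omega) (by omega),
        ← dvd_char' (n : ℤ) p s ((k : ℤ) + 1) ((k : ℤ) * (j - i) - ((k : ℤ) + 1)) hN
          (by linear_combination hp) hs0 hsN (by omega) (by omega),
        hdvdmul (j - i - ((k' : ℤ) + 1)),
        dvd_shift' (n : ℤ) ((k : ℤ) * (j - i - ((k' : ℤ) + 1)))
          ((k : ℤ) * (j - i) - ((k : ℤ) + 1)) (-m) (by linear_combination -hm)]
  have pack : ∀ a v : ℤ, (∃ c, a = v + (n : ℤ) * c) → -(n : ℤ) ≤ v → v < n →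
      ∃ t, a % (n : ℤ) = t ∧ (t = v ∨ t = v + n) ∧ 0 ≤ t ∧ t < n := by
    rintro a v ⟨c, hc⟩ hv1 hv2
    refine ⟨a % n, rfl, ?_, Int.emod_nonneg _ (by omega), Int.emod_lt_of_pos _ hN⟩
    rw [hc, Int.add_mul_emod_self_left]
    exact emod_cases' _ _ hN hv1 hv2
  obtain ⟨t1, e1, d1, l1, u1⟩ := pack (j - (i + 1)) (r - 1)
    ⟨q, by linear_combination hq⟩ (by omega) (by omega)
  obtain ⟨t2, e2, d2, l2, u2⟩ := pack ((k : ℤ) * (j - (i + 1))) (s - k)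
    ⟨p, by linear_combination hp⟩ (by omega) (by omega)
  obtain ⟨t3, e3, d3, l3, u3⟩ := pack (j - (i + (k' : ℤ))) (r - k')
    ⟨q, by linear_combination hq⟩ (by omega) (by omega)
  obtain ⟨t4, e4, d4, l4, u4⟩ := pack ((k : ℤ) * (j - (i + (k' : ℤ)))) (s - 1)
    ⟨p - m, by linear_combination hp - hm⟩ (by omega) (by omega)
  obtain ⟨t5, e5, d5, l5, u5⟩ := pack (j - i) r
    ⟨q, by linear_combination hq⟩ (by omega) (by omega)
  obtain ⟨t6, e6, d6, l6, u6⟩ := pack ((k : ℤ) * (j - i)) s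
    ⟨p, by linear_combination hp⟩ (by omega) (by omega)
  obtain ⟨t7, e7, d7, l7, u7⟩ := pack (j - (i + (k' : ℤ) + 1)) (r - ((k' : ℤ) + 1))
    ⟨q, by linear_combination hq⟩ (by omega) (by omega)
  obtain ⟨t8, e8, d8, l8, u8⟩ := pack ((k : ℤ) * (j - (i + (k' : ℤ) + 1))) (s - ((k : ℤ) + 1))
    ⟨p - m, by linear_combination hp - hm⟩ (by omega) (by omega)
  obtain ⟨t9, e9, d9, l9, u9⟩ := pack (i - j) (-r)
    ⟨-q, by linear_combination -hq⟩ (by omega) (by omega)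
  obtain ⟨t10, e10, d10, l10, u10⟩ := pack (j - i - ((k' : ℤ) + 1)) (r - ((k' : ℤ) + 1))
    ⟨q, by linear_combination hq⟩ (by omega) (by omega)
  simp only [PiZ]
  rw [e1, e2, e3, e4, e5, e6, e7, e8, e9, e10]
  clear e1 e2 e3 e4 e5 e6 e7 e8 e9 e10 hq hp hmz hm hinv hdvdmul pack
  split_ifs <;> omega
end

section
/- Let n ≥ 3 and 1 ≤ k < n with gcd(n,k) = 1. Then for all integers i, j with 1 ≤ i < j ≤ n−1, the quantity Π_{ij} − Π_{i0} − Π_{0j} equals 0 if ((k(j−i)) mod n) + ((ki) mod n) ≥ n, and equals −n if ((k(j−i)) mod n) + ((ki) mod n) < n. -/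
open BigOperators Matrix

/-- For `1 ≤ i < j ≤ n−1`, the quantity
`Π_{ij} − Π_{i0} − Π_{0j}` equals `0` if `((k(j−i)) mod n) + ((ki) mod n) ≥ n`,
and equals `−n` otherwise. -/
theorem Pi_affine_chart (n k : ℕ) (hn : 3 ≤ n) (hk1 : 1 ≤ k) (hk2 : k < n)
    (h1 : Nat.gcd n k = 1) :
    ∀ i j : ℕ, 1 ≤ i → i < j → j ≤ n - 1 →
      PiZ n k (i : ℤ) (j : ℤ) - PiZ n k (i : ℤ) 0 - PiZ n k 0 (j : ℤ) =
        if n ≤ (k * (j - i)) % n + (k * i) % n then 0 else -(n : ℤ) := by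
  intro i j hi hij hj
  have hn0 : (0:ℤ) < n := by exact_mod_cast (by omega : 0 < n)
  have hi1 : (1:ℤ) ≤ i := by exact_mod_cast hi
  have hij' : (i:ℤ) < j := by exact_mod_cast hij
  have hjn : (j:ℤ) < n := by exact_mod_cast (by omega : j < n)
  set A : ℤ := ((k:ℤ) * ((j:ℤ) - i)) % n with hAdef
  set r : ℤ := ((k:ℤ) * i) % n with hrdef
  clear_value A r
  have hA0 : 0 ≤ A := by rw [hAdef]; exact Int.emod_nonneg _ (by omega)
  have hAn : A < n := by rw [hAdef]; exact Int.emod_lt_of_pos _ hn0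
  have hr0 : 0 ≤ r := by rw [hrdef]; exact Int.emod_nonneg _ (by omega)
  have hrn : r < n := by rw [hrdef]; exact Int.emod_lt_of_pos _ hn0
  -- r ≠ 0
  have hrne : r ≠ 0 := by
    intro h
    rw [hrdef] at h
    have hdvd : (n:ℤ) ∣ (k:ℤ) * i := Int.dvd_of_emod_eq_zero h
    have hdvd' : n ∣ k * i := by exact_mod_cast hdvd
    have hcop : Nat.Coprime n k := h1
    have : n ∣ i := hcop.dvd_of_dvd_mul_left hdvd'
    have : n ≤ i := Nat.le_of_dvd (by omega) this
    omega
  -- the three mod computations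
  have e1 : ((j:ℤ) - i) % n = (j:ℤ) - i := Int.emod_eq_of_lt (by omega) (by omega)
  have e2 : ((0:ℤ) - i) % n = (n:ℤ) - i := by
    rw [show (0:ℤ) - i = ((n:ℤ) - i) + n * (-1) by ring, Int.add_mul_emod_self_left]
    exact Int.emod_eq_of_lt (by omega) (by omega)
  have e3 : ((j:ℤ) - 0) % n = (j:ℤ) := by
    rw [sub_zero]; exact Int.emod_eq_of_lt (by omega) (by omega)
  have e4 : ((k:ℤ) * ((0:ℤ) - i)) % n = n - r := by
    have hdecomp := Int.mul_ediv_add_emod ((k:ℤ) * i) n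
    rw [← hrdef] at hdecomp
    rw [show (k:ℤ) * ((0:ℤ) - i) = ((n:ℤ) - r) + n * (-(((k:ℤ) * i) / n) - 1) by
      linear_combination hdecomp]
    rw [Int.add_mul_emod_self_left]
    apply Int.emod_eq_of_lt <;> omega
  have e5 : ((k:ℤ) * ((j:ℤ) - 0)) % n = (A + r) % n := by
    rw [sub_zero, show (k:ℤ) * j = (k:ℤ) * ((j:ℤ) - i) + (k:ℤ) * i by ring,
      Int.add_emod, ← hAdef, ← hrdef]
  -- nonzero conditions
  have ne1 : ((j:ℤ) - i) % n ≠ 0 := by rw [e1]; omega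
  have ne2 : ((0:ℤ) - i) % n ≠ 0 := by rw [e2]; omega
  have ne3 : ((j:ℤ) - 0) % n ≠ 0 := by rw [e3]; omega
  -- bridge condition between ℕ and ℤ
  have hAcast : A = ((k * (j - i)) % n : ℕ) := by
    rw [hAdef]
    push_cast [Nat.cast_sub hij.le]
    ring_nf
  have hrcast : r = ((k * i) % n : ℕ) := by rw [hrdef]; push_cast; ring
  have hcond : (n ≤ (k * (j - i)) % n + (k * i) % n) ↔ ((n:ℤ) ≤ A + r) := by
    rw [hAcast, hrcast]
    constructor
    · intro h; exact_mod_cast h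
    · intro h; exact_mod_cast h
  -- compute (A + r) % n
  unfold PiZ
  rw [if_neg ne1, if_neg ne2, if_neg ne3, e1, e2, e3, e4, e5, ← hAdef]
  by_cases hcase : (n:ℤ) ≤ A + r
  · have : (A + r) % n = A + r - n := by
      conv_lhs => rw [show A + r = (A + r - n) + n * 1 by ring, Int.add_mul_emod_self_left]
      apply Int.emod_eq_of_lt <;> omega
    rw [this, if_pos (hcond.mpr hcase)]
    ring
  · have : (A + r) % n = A + r := by apply Int.emod_eq_of_lt <;> omega
    rw [this, if_neg (fun h => hcase (hcond.mp h))]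
    push_neg at hcase
    ring
end
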